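/- arXiv:1006.1444 — 2 statements merged into one kernel-verified Lean document; each statement's English description precedes it below -/
import Mathlib

section
/- Let $M$ be a finitely generated $\mathbb{Z}^n$-graded module over $R = k[x_1,\ldots,x_n]$ with a Stanley decomposition $\mathcal{S} = \{(m_1,G_1),\ldots,(m_p,G_p)\}$ such that each $(\deg m_i)^+$ is square-free, $G_i = \{x_l : l \in \mathrm{supp}((\deg m_i)^+)\}$, and $|\deg m_1| \ge \cdots \ge |\deg m_p|$. Set $M^{(j)} = \sum_{i=1}^j R m_i$. Then for each $j$, there is a short exact sequence of $\mathbb{Z}^n$-graded $R$-modules $0 \to M^{(j-1)} \to M^{(j)} \to k[G_j](-\deg m_j) \to 0$, where the quotient is the free $k[G_j]$-module on the class of $m_j$. -/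
/-!
Common definitions: `ℤⁿ`-graded modules over `R = k[x_1, …, x_n]`, Stanley
decompositions, the Čech complex on `x_1, …, x_n` (computing local cohomology
`H^i_𝔪` and, via the standard characterization, Castelnuovo–Mumford regularity),
and `Ext^i_R(R/I, ω_R)` for a monomial ideal `I`, computed with its natural
`ℤⁿ`-grading from the Taylor complex, which is a graded free resolution of `R/I`
on a chosen set of monomial generators of `I`.
-/

open MvPolynomial

namespace Paper

variable {k : Type} [Field k] {n : ℕ}

/-- The unit vector `e j` in `ℤⁿ`. -/
def eZ (n : ℕ) (j : Fin n) : Fin n → ℤ := fun i => if i = j then 1 else 0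

section Stanley

variable (k n)
variable (M : Type) [AddCommGroup M] [Module (MvPolynomial (Fin n) k) M]
  [Module k M] [IsScalarTower k (MvPolynomial (Fin n) k) M]

/-- The `k`-subspace `k[G]m` of `M` spanned by all `u • m`, `u` a monomial in the
variables of `G`. -/
def stanleySpan (m : M) (G : Set (Fin n)) : Submodule k M :=
  Submodule.span k
    {x | ∃ u : Fin n →₀ ℕ, ↑u.support ⊆ G ∧ x = (monomial u (1 : k) : MvPolynomial (Fin n) k) • m}

/-- `k[G]m` is a Stanley space: no monomial in the variables of `G` kills `m`. -/
def IsStanleySpace (m : M) (G : Set (Fin n)) : Prop :=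
  ∀ u : Fin n →₀ ℕ, ↑u.support ⊆ G → (monomial u (1 : k) : MvPolynomial (Fin n) k) • m ≠ 0

/-- A Stanley decomposition of `M`: finitely many pairs `(m i, G i)` such that each
`k[G i](m i)` is a Stanley space and `M = ⊕ᵢ k[G i](m i)` as `k`-vector spaces. -/
def IsStanleyDecomposition {p : ℕ} (m : Fin p → M) (G : Fin p → Set (Fin n)) : Prop :=
  (∀ i, IsStanleySpace k n M (m i) (G i)) ∧
    DirectSum.IsInternal (fun i : Fin p => stanleySpan k n M (m i) (G i))

end Stanley

section PartialSpan

variable (k n)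

/-- `M⁽ʲ⁾ = R m_1 + ⋯ + R m_j`, the `R`-submodule generated by the first `j`
elements of the family `m`. -/
noncomputable def partialSpan (M : Type) [AddCommGroup M] [Module (MvPolynomial (Fin n) k) M]
    {p : ℕ} (m : Fin p → M) (j : ℕ) : Submodule (MvPolynomial (Fin n) k) M :=
  Submodule.span (MvPolynomial (Fin n) k) (m '' {i : Fin p | (i : ℕ) < j})

end PartialSpan

section Cech

variable (k n)

/-- The multiplicative set generated by the variables `x i`, `i ∈ Λ`. -/
noncomputable def varSubmonoid (Λ : Finset (Fin n)) : Submonoid (MvPolynomial (Fin n) k) :=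
  Submonoid.closure ((fun i => (X i : MvPolynomial (Fin n) k)) '' ↑Λ)

lemma varSubmonoid_mono {Λ Λ' : Finset (Fin n)} (h : Λ ⊆ Λ') :
    varSubmonoid k n Λ ≤ varSubmonoid k n Λ' :=
  Submonoid.closure_mono (Set.image_mono (by exact_mod_cast h))

variable (M : Type) [AddCommGroup M] [Module (MvPolynomial (Fin n) k) M]

/-- The localization `M_{x_Λ}` of `M` inverting the variables in `Λ`. -/
abbrev LocM (Λ : Finset (Fin n)) : Type := LocalizedModule (varSubmonoid k n Λ) M

/-- The canonical map `M_{x_Λ} → M_{x_Λ'}` for `Λ ⊆ Λ'`. -/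
noncomputable def locMap {Λ Λ' : Finset (Fin n)} (h : Λ ⊆ Λ') :
    LocM k n M Λ →ₗ[MvPolynomial (Fin n) k] LocM k n M Λ' :=
  LocalizedModule.lift _ (LocalizedModule.mkLinearMap (varSubmonoid k n Λ') M)
    (fun s => IsLocalizedModule.map_units (LocalizedModule.mkLinearMap (varSubmonoid k n Λ') M)
      ⟨(s : MvPolynomial (Fin n) k), varSubmonoid_mono k n h s.2⟩)

/-- The `j`-th term `Čʲ(M) = ⊕_{|Λ| = j} M_{x_Λ}` of the Čech complex of `M` on the
variables `x 1, …, x n`. -/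
abbrev CechTerm (j : ℕ) : Type :=
  ∀ Λ : {S : Finset (Fin n) // S.card = j}, LocM k n M Λ.1

/-- The Čech differential, an alternating sum of localization maps. -/
noncomputable def cechD (j : ℕ) :
    CechTerm k n M j →ₗ[MvPolynomial (Fin n) k] CechTerm k n M (j + 1) :=
  LinearMap.pi fun Λ' : {S : Finset (Fin n) // S.card = j + 1} =>
    ∑ l ∈ Λ'.1.attach,
      ((-1 : ℤ) ^ ((Λ'.1.filter (fun x => x < l.1)).card)) •
        ((locMap k n M (Finset.erase_subset l.1 Λ'.1)).comp
          (LinearMap.proj (⟨Λ'.1.erase l.1, by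
            rw [Finset.card_erase_of_mem l.2, Λ'.2]; rfl⟩ :
              {S : Finset (Fin n) // S.card = j})))

/-- The coboundaries in cohomological degree `i` of the Čech complex of `M`. -/
noncomputable def cechB : (i : ℕ) → Submodule (MvPolynomial (Fin n) k) (CechTerm k n M i)
  | 0 => ⊥
  | (s + 1) => LinearMap.range (cechD k n M s)

/-- The `j`-th term of the restricted Čech subcomplex `Č_F`: only the direct summands
`M_{x_Λ}` with `F ⊆ Λ` occur (in particular it vanishes for `j < |F|`). -/
def cechSub (F : Finset (Fin n)) (j : ℕ) :
    Submodule (MvPolynomial (Fin n) k) (CechTerm k n M j) where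
  carrier := {c | ∀ Λ, ¬ F ⊆ Λ.1 → c Λ = 0}
  add_mem' := fun h1 h2 Λ h => by
    have := h1 Λ h; have := h2 Λ h
    simp_all
  zero_mem' := fun Λ h => rfl
  smul_mem' := fun r c hc Λ h => by
    have := hc Λ h
    simp_all

/-- The coboundaries of the restricted subcomplex `Č_F` in cohomological degree `i`. -/
noncomputable def cechBF (F : Finset (Fin n)) :
    (i : ℕ) → Submodule (MvPolynomial (Fin n) k) (CechTerm k n M i)
  | 0 => ⊥
  | (s + 1) => Submodule.map (cechD k n M s) (cechSub k n M F s)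

end Cech

section CechGraded

variable (k n)
variable (M : Type) [AddCommGroup M] [Module (MvPolynomial (Fin n) k) M]
variable (gr : (Fin n → ℤ) → Set M)

/-- The multidegree `a` component (for the `ℤⁿ`-grading of `M` given by `gr`) of the
localization `M_{x_Λ}`: generated by fractions `m / xˢ` where `m` is homogeneous of
multidegree `b`, `xˢ` is a monomial in the variables of `Λ` and `b - s = a`. -/
noncomputable def locPiece (Λ : Finset (Fin n)) (a : Fin n → ℤ) :
    AddSubgroup (LocM k n M Λ) :=
  AddSubgroup.closure
    {y | ∃ (m : M) (b : Fin n → ℤ) (s : Fin n →₀ ℕ)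
        (hs : (monomial s (1 : k) : MvPolynomial (Fin n) k) ∈ varSubmonoid k n Λ),
          m ∈ gr b ∧ (∀ i, b i - (s i : ℤ) = a i) ∧
            y = LocalizedModule.mk m ⟨monomial s (1 : k), hs⟩}

/-- The multidegree `a` component of the `j`-th term of the Čech complex of `M`. -/
noncomputable def cechPiece (j : ℕ) (a : Fin n → ℤ) : Set (CechTerm k n M j) :=
  {c | ∀ Λ, c Λ ∈ locPiece k n M gr Λ.1 a}

/-- The total degree `t` component of the `j`-th term of the Čech complex of `M`. -/
noncomputable def cechPieceTot (j : ℕ) (t : ℤ) : AddSubgroup (CechTerm k n M j) :=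
  ⨆ (a : Fin n → ℤ) (_ : (∑ i, a i) = t), AddSubgroup.closure (cechPiece k n M gr j a)

/-- `regLE k n M gr c` says that the Castelnuovo–Mumford regularity of the graded
module `M` (with respect to the total degree `ℤ`-grading) is at most `c`; by the
standard local cohomology characterization of regularity,
`reg M = max {i + t : Hⁱ_𝔪(M)_t ≠ 0}`, where `Hⁱ_𝔪(M)` is the cohomology of the
Čech complex of `M` on `x 1, …, x n`. -/
noncomputable def regLE (c : ℤ) : Prop :=
  ∀ (i : ℕ) (t : ℤ) (z : CechTerm k n M i),
    z ∈ LinearMap.ker (cechD k n M i) → z ∈ cechPieceTot k n M gr i t →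
      z ∉ cechB k n M i → (i : ℤ) + t ≤ c

end CechGraded

section Pieces

variable (k n)

/-- The set of homogeneous polynomials of multidegree `a ∈ ℤⁿ`
(empty if some `a i < 0`). -/
def RPieceSet (a : Fin n → ℤ) : Set (MvPolynomial (Fin n) k) :=
  {g | ∃ (c : k) (s : Fin n →₀ ℕ), (∀ i, (s i : ℤ) = a i) ∧ g = monomial s c}

/-- The multidegree `a` component of the polynomial ring, as a `k`-subspace. -/
noncomputable def RPiece (a : Fin n → ℤ) : Submodule k (MvPolynomial (Fin n) k) :=
  Submodule.span k (RPieceSet k n a)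

/-- A monomial ideal: an ideal generated by monomials. -/
def IsMonomialIdeal (I : Ideal (MvPolynomial (Fin n) k)) : Prop :=
  ∃ T : Set (Fin n →₀ ℕ), I = Ideal.span ((fun s => (monomial s (1 : k))) '' T)

/-- The multidegree `a` component of `R/I`: the image of the multidegree `a`
component of `R`. -/
def quotientGrSet (I : Ideal (MvPolynomial (Fin n) k)) (a : Fin n → ℤ) :
    Set (MvPolynomial (Fin n) k ⧸ I) :=
  (fun g => Submodule.Quotient.mk g) '' RPieceSet k n a

end Pieces

section Taylor

variable (k n)
variable {r : ℕ} (u : Fin r → (Fin n →₀ ℕ))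

/-- The exponent of the least common multiple of the monomials `x^(u l)`, `l ∈ S`. -/
noncomputable def lcmExp (S : Finset (Fin r)) : Fin n →₀ ℕ :=
  Finsupp.equivFunOnFinite.symm (fun i => S.sup (fun l => u l i))

/-- The `s`-th term of `Hom_R(T_•, ω_R)`, where `T_•` is the Taylor complex (a
`ℤⁿ`-graded free resolution of `R/I`) on the monomial generators `x^(u l)` of `I`:
as a module it is a direct sum of copies of `R` indexed by `s`-subsets of generators. -/
abbrev TaylorDual (s : ℕ) : Type :=
  ∀ _S : {S : Finset (Fin r) // S.card = s}, MvPolynomial (Fin n) k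

/-- The differential of `Hom_R(T_•, ω_R)`: the transpose of the Taylor complex
differential. -/
noncomputable def taylorD (s : ℕ) :
    TaylorDual k n (r := r) s →ₗ[MvPolynomial (Fin n) k] TaylorDual k n (r := r) (s + 1) :=
  LinearMap.pi fun S' : {S : Finset (Fin r) // S.card = s + 1} =>
    ∑ l ∈ S'.1.attach,
      (monomial (lcmExp n u S'.1 - lcmExp n u (S'.1.erase l.1))
          ((-1 : k) ^ ((S'.1.filter (fun x => x < l.1)).card))) •
        (LinearMap.proj (⟨S'.1.erase l.1, by
            rw [Finset.card_erase_of_mem l.2, S'.2]; rfl⟩ :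
              {S : Finset (Fin r) // S.card = s}))

/-- Cocycles of `Hom_R(T_•, ω_R)` in cohomological degree `i`. -/
noncomputable def extZ (i : ℕ) :
    Submodule (MvPolynomial (Fin n) k) (TaylorDual k n (r := r) i) :=
  LinearMap.ker (taylorD k n u i)

/-- Coboundaries of `Hom_R(T_•, ω_R)` in cohomological degree `i`. -/
noncomputable def extB :
    (i : ℕ) → Submodule (MvPolynomial (Fin n) k) (TaylorDual k n (r := r) i)
  | 0 => ⊥
  | (s + 1) => LinearMap.range (taylorD k n u s)

/-- `Ext^i_R(R/I, ω_R)`: the `i`-th cohomology of `Hom_R(T_•, ω_R)`, where `T_•` is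
the Taylor resolution of `R/I` on the monomial generators `x^(u l)` of `I` and
`ω_R = R(-(1,…,1))` is the canonical module. -/
noncomputable def ExtMod (i : ℕ) : Type :=
  extZ k n u i ⧸ (Submodule.comap (extZ k n u i).subtype (extB k n u i ⊓ extZ k n u i))

noncomputable instance (i : ℕ) : AddCommGroup (ExtMod k n u i) :=
  inferInstanceAs (AddCommGroup (extZ k n u i ⧸ _))

noncomputable instance (i : ℕ) : Module (MvPolynomial (Fin n) k) (ExtMod k n u i) :=
  inferInstanceAs (Module (MvPolynomial (Fin n) k) (extZ k n u i ⧸ _))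

noncomputable instance (i : ℕ) : Module k (ExtMod k n u i) :=
  inferInstanceAs (Module k (extZ k n u i ⧸ _))

noncomputable instance (i : ℕ) :
    IsScalarTower k (MvPolynomial (Fin n) k) (ExtMod k n u i) :=
  inferInstanceAs (IsScalarTower k (MvPolynomial (Fin n) k) (extZ k n u i ⧸ _))

/-- The multidegree `a` component of `Hom_R(T_s, ω_R) = ⊕_S Hom_R(R(-lcm_S), R(-(1,…,1)))`:
the component indexed by an `s`-subset `S` must be homogeneous of multidegree
`a + lcm_S - (1,…,1)` in `R`. -/
noncomputable def taylorPiece (s : ℕ) (a : Fin n → ℤ) :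
    Submodule k (TaylorDual k n (r := r) s) :=
  Submodule.pi Set.univ
    (fun S : {S : Finset (Fin r) // S.card = s} =>
      RPiece k n (fun i => a i + (lcmExp n u S.1 i : ℤ) - 1))

/-- The multidegree `a` component of `Ext^i_R(R/I, ω_R)`, i.e. of the `i`-th
cohomology of `Hom_R(T_•, ω_R)`: the image of the multidegree `a` cocycles. -/
noncomputable def extPiece (i : ℕ) (a : Fin n → ℤ) : Submodule k (ExtMod k n u i) :=
  Submodule.map
    ((Submodule.mkQ (Submodule.comap (extZ k n u i).subtype
        (extB k n u i ⊓ extZ k n u i))).restrictScalars k)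
    (Submodule.comap ((extZ k n u i).subtype.restrictScalars k) (taylorPiece k n u i a))

end Taylor

end Paper

section StanleyAux

open MvPolynomial Paper

variable {k : Type} [Field k] {n : ℕ}
variable {M : Type} [AddCommGroup M] [Module (MvPolynomial (Fin n) k) M]
  [Module k M] [IsScalarTower k (MvPolynomial (Fin n) k) M]

lemma grX_pow (gr : (Fin n → ℤ) → Submodule k M)
    (hgr_compat : ∀ (j : Fin n) (a : Fin n → ℤ), ∀ x ∈ gr a,
      (X j : MvPolynomial (Fin n) k) • x ∈ gr (a + eZ n j))
    (b : ℕ) (l : Fin n) :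
    ∀ (a : Fin n → ℤ) (x : M), x ∈ gr a →
      (X l ^ b : MvPolynomial (Fin n) k) • x ∈
        gr (fun q => a q + if q = l then (b : ℤ) else 0) := by
  induction b with
  | zero =>
    intro a x hx
    have h : (fun q => a q + if q = l then ((0 : ℕ) : ℤ) else 0) = a := by
      funext q; split <;> simp
    rw [pow_zero, one_smul, h]
    exact hx
  | succ b ih =>
    intro a x hx
    have h1 := ih _ _ (hgr_compat l a x hx)
    have h : (fun q => (a + eZ n l) q + if q = l then (b : ℤ) else 0)
        = (fun q => a q + if q = l then (((b : ℕ) + 1 : ℕ) : ℤ) else 0) := by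
      funext q
      by_cases hq : q = l
      · simp [eZ, hq]; push_cast; ring
      · simp [eZ, hq]
    rw [pow_succ, mul_smul]
    rw [h] at h1
    exact h1

lemma gr_mon (gr : (Fin n → ℤ) → Submodule k M)
    (hgr_compat : ∀ (j : Fin n) (a : Fin n → ℤ), ∀ x ∈ gr a,
      (X j : MvPolynomial (Fin n) k) • x ∈ gr (a + eZ n j))
    (u : Fin n →₀ ℕ) :
    ∀ (a : Fin n → ℤ) (x : M), x ∈ gr a →
      (monomial u (1:k) : MvPolynomial (Fin n) k) • x ∈ gr (fun q => a q + (u q : ℤ)) := by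
  induction u using Finsupp.induction with
  | zero =>
    intro a x hx
    have h : (fun q => a q + (((0 : Fin n →₀ ℕ) q : ℕ) : ℤ)) = a := by funext q; simp
    rw [h]
    simpa [monomial_zero'] using hx
  | single_add l b f hlf hb ih =>
    intro a x hx
    have hmono : (monomial (Finsupp.single l b + f) (1:k) : MvPolynomial (Fin n) k)
        = X l ^ b * monomial f 1 := by
      rw [X_pow_eq_monomial, monomial_mul, one_mul]
    have h1 := grX_pow gr hgr_compat b l _ _ (ih a x hx)
    have h : (fun q => (a q + (f q : ℤ)) + if q = l then (b : ℤ) else 0)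
        = (fun q => a q + (((Finsupp.single l b + f) q : ℕ) : ℤ)) := by
      funext q
      by_cases hq : q = l
      · subst hq; simp [Finsupp.single_apply]; push_cast; ring
      · simp [Finsupp.single_apply, Ne.symm hq, hq]
    rw [hmono, mul_smul]
    rw [h] at h1
    exact h1

/-- The generating set of the Stanley space `k[G i] (m i)`. -/
def GenSet (k : Type) [Field k] (n : ℕ) (M : Type) [AddCommGroup M]
    [Module (MvPolynomial (Fin n) k) M] {p : ℕ} (m : Fin p → M) (G : Fin p → Set (Fin n))
    (i : Fin p) : Set M :=
  {x | ∃ u : Fin n →₀ ℕ, ↑u.support ⊆ G i ∧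
    x = (monomial u (1 : k) : MvPolynomial (Fin n) k) • m i}

lemma stanleySpan_eq {p : ℕ} (m : Fin p → M) (G : Fin p → Set (Fin n)) (i : Fin p) :
    stanleySpan k n M (m i) (G i) = Submodule.span k (GenSet k n M m G i) := rfl

/-- The sum of the first `N` Stanley spaces, as a `k`-submodule. -/
def Tle (k : Type) [Field k] (n : ℕ) (M : Type) [AddCommGroup M]
    [Module (MvPolynomial (Fin n) k) M] [Module k M] {p : ℕ} (m : Fin p → M)
    (G : Fin p → Set (Fin n)) (N : ℕ) : Submodule k M :=
  Submodule.span k (⋃ (i : Fin p) (_ : (i : ℕ) < N), GenSet k n M m G i)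

lemma Tle_mono {p : ℕ} (m : Fin p → M) (G : Fin p → Set (Fin n)) {N N' : ℕ} (h : N ≤ N') :
    Tle k n M m G N ≤ Tle k n M m G N' := by
  apply Submodule.span_mono
  intro x hx
  simp only [Set.mem_iUnion] at hx ⊢
  obtain ⟨i, hi, hxi⟩ := hx
  exact ⟨i, by omega, hxi⟩

/-- Key degree computation: if `l ∉ G j₀` then `x_l • m j₀` lies in the `k`-span of the
earlier generators `m i`, `i < j₀`. -/
lemma lemA {p : ℕ} (gr : (Fin n → ℤ) → Submodule k M)
    (hgr_internal : DirectSum.IsInternal gr)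
    (hgr_compat : ∀ (j : Fin n) (a : Fin n → ℤ), ∀ x ∈ gr a,
      (X j : MvPolynomial (Fin n) k) • x ∈ gr (a + eZ n j))
    (m : Fin p → M) (G : Fin p → Set (Fin n)) (d : Fin p → (Fin n → ℤ))
    (hSD : IsStanleyDecomposition k n M m G)
    (hdeg : ∀ i, m i ∈ gr (d i))
    (hsf : ∀ i l, d i l ≤ 1)
    (hG : ∀ i, G i = {l | 0 < d i l})
    (hord : ∀ i j : Fin p, i ≤ j → (∑ l, d j l) ≤ (∑ l, d i l))
    (j0 : Fin p) (l : Fin n) (hl : l ∉ G j0) :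
    (X l : MvPolynomial (Fin n) k) • m j0 ∈
      Submodule.span k (m '' {i' : Fin p | (i' : ℕ) < (j0 : ℕ)}) := by
  classical
  have hx : (X l : MvPolynomial (Fin n) k) • m j0 ∈ gr (d j0 + eZ n l) :=
    hgr_compat l (d j0) (m j0) (hdeg j0)
  have htop : (X l : MvPolynomial (Fin n) k) • m j0 ∈
      Submodule.span k (⋃ i', GenSet k n M m G i') := by
    rw [Submodule.span_iUnion]
    have h1 : (⨆ i', Submodule.span k (GenSet k n M m G i')) = ⊤ :=
      hSD.2.submodule_iSup_eq_top
    rw [h1]; trivial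
  rw [Submodule.mem_span_set'] at htop
  obtain ⟨N, f, g, hgx⟩ := htop
  have hg : ∀ t : Fin N, ∃ (i' : Fin p) (u : Fin n →₀ ℕ),
      ↑u.support ⊆ G i' ∧ (g t : M) = (monomial u (1 : k) : MvPolynomial (Fin n) k) • m i' := by
    intro t
    have h2 := (g t).2
    simp only [Set.mem_iUnion, GenSet, Set.mem_setOf_eq] at h2
    exact h2
  choose idx uu hsupp hrep using hg
  set b : Fin n → ℤ := d j0 + eZ n l with hb
  set A : Fin N → Fin n → ℤ := fun t q => d (idx t) q + (uu t q : ℤ) with hA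
  have hterm : ∀ t, f t • (g t : M) ∈ gr (A t) := by
    intro t
    rw [hrep t]
    exact Submodule.smul_mem _ _ (gr_mon gr hgr_compat (uu t) _ _ (hdeg (idx t)))
  have hsplit : ∑ t ∈ Finset.univ.filter (fun t => A t = b), f t • (g t : M)
      + ∑ t ∈ Finset.univ.filter (fun t => ¬ A t = b), f t • (g t : M)
      = (X l : MvPolynomial (Fin n) k) • m j0 := by
    rw [Finset.sum_filter_add_sum_filter_not]
    exact hgx
  have hyb : ∑ t ∈ Finset.univ.filter (fun t => ¬ A t = b), f t • (g t : M) ∈ gr b := by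
    have heq : ∑ t ∈ Finset.univ.filter (fun t => ¬ A t = b), f t • (g t : M)
        = (X l : MvPolynomial (Fin n) k) • m j0
          - ∑ t ∈ Finset.univ.filter (fun t => A t = b), f t • (g t : M) := by
      rw [← hsplit]; abel
    rw [heq]
    refine Submodule.sub_mem _ hx (Submodule.sum_mem _ fun t ht => ?_)
    have h5 : A t = b := by simpa using (Finset.mem_filter.mp ht).2
    exact h5 ▸ hterm t
  have hyi : ∑ t ∈ Finset.univ.filter (fun t => ¬ A t = b), f t • (g t : M)
      ∈ ⨆ (a : Fin n → ℤ) (_ : a ≠ b), gr a := by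
    refine Submodule.sum_mem _ fun t ht => ?_
    have h5 : A t ≠ b := by simpa using (Finset.mem_filter.mp ht).2
    exact Submodule.mem_iSup_of_mem (A t) (Submodule.mem_iSup_of_mem h5 (hterm t))
  have hy0 : ∑ t ∈ Finset.univ.filter (fun t => ¬ A t = b), f t • (g t : M) = 0 :=
    Submodule.disjoint_def.mp (hgr_internal.submodule_iSupIndep (i := b)) _ hyb hyi
  have hx' : (X l : MvPolynomial (Fin n) k) • m j0
      = ∑ t ∈ Finset.univ.filter (fun t => A t = b), f t • (g t : M) := by
    rw [← hsplit, hy0, add_zero]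
  rw [hx']
  refine Submodule.sum_mem _ fun t ht => ?_
  have hAt : A t = b := by simpa using (Finset.mem_filter.mp ht).2
  have hu0 : uu t = 0 := by
    by_contra hne
    have h6 : ∃ q, uu t q ≠ 0 := by
      by_contra h7
      push_neg at h7
      exact hne (Finsupp.ext h7)
    obtain ⟨q, hq⟩ := h6
    have hqG : q ∈ G (idx t) := hsupp t (Finsupp.mem_support_iff.mpr hq)
    have hd1 : d (idx t) q = 1 := by
      have h8 : 0 < d (idx t) q := by rw [hG] at hqG; exact hqG
      have h9 := hsf (idx t) q
      omega
    have heq := congrFun hAt q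
    simp only [hA, hb, Pi.add_apply, eZ] at heq
    have h10 : 1 ≤ uu t q := Nat.one_le_iff_ne_zero.mpr hq
    have hdj := hsf j0 q
    by_cases hql : q = l
    · subst hql
      have h11 : d j0 q ≤ 0 := by
        by_contra h12
        exact hl (by rw [hG]; exact (by omega : 0 < d j0 q))
      rw [if_pos rfl] at heq
      omega
    · rw [if_neg hql] at heq
      omega
  have h13 : ∀ q, d (idx t) q = b q := by
    intro q
    have h14 := congrFun hAt q
    simp only [hA, hu0, Finsupp.coe_zero, Pi.zero_apply, Nat.cast_zero, add_zero] at h14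
    exact h14
  have hsum : ∑ q, d (idx t) q = (∑ q, d j0 q) + 1 := by
    rw [Finset.sum_congr rfl fun q _ => h13 q]
    simp only [hb, Pi.add_apply, eZ, Finset.sum_add_distrib]
    rw [show (d j0 + eZ n l) = fun q => d j0 q + eZ n l q from rfl, Finset.sum_add_distrib]
    simp [eZ]
  have hlt : (idx t : ℕ) < (j0 : ℕ) := by
    by_contra h14
    have h15 := hord j0 (idx t) (Fin.le_def.mpr (by omega))
    rw [hsum] at h15
    linarith
  rw [hrep t, hu0]
  have h16 : (monomial (0 : Fin n →₀ ℕ) (1:k) : MvPolynomial (Fin n) k) = 1 := by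
    simp [monomial_zero']
  rw [h16, one_smul]
  exact Submodule.smul_mem _ _ (Submodule.subset_span ⟨idx t, hlt, rfl⟩)

/-- Every monomial multiple of `m i` lies in the sum of the Stanley spaces with index `≤ i`. -/
lemma lemKey {p : ℕ} (gr : (Fin n → ℤ) → Submodule k M)
    (hgr_internal : DirectSum.IsInternal gr)
    (hgr_compat : ∀ (j : Fin n) (a : Fin n → ℤ), ∀ x ∈ gr a,
      (X j : MvPolynomial (Fin n) k) • x ∈ gr (a + eZ n j))
    (m : Fin p → M) (G : Fin p → Set (Fin n)) (d : Fin p → (Fin n → ℤ))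
    (hSD : IsStanleyDecomposition k n M m G)
    (hdeg : ∀ i, m i ∈ gr (d i))
    (hsf : ∀ i l, d i l ≤ 1)
    (hG : ∀ i, G i = {l | 0 < d i l})
    (hord : ∀ i j : Fin p, i ≤ j → (∑ l, d j l) ≤ (∑ l, d i l)) :
    ∀ (Nb : ℕ) (i : Fin p), (i : ℕ) < Nb → ∀ u : Fin n →₀ ℕ,
      (monomial u (1:k) : MvPolynomial (Fin n) k) • m i ∈ Tle k n M m G ((i : ℕ) + 1) := by
  classical
  intro Nb
  induction Nb with
  | zero => intro i hi; omega
  | succ Nb ih =>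
    intro i hi u
    by_cases hsub : ↑u.support ⊆ G i
    · exact Submodule.subset_span (Set.mem_iUnion₂.mpr ⟨i, by omega, ⟨u, hsub, rfl⟩⟩)
    · obtain ⟨l, hlu, hlG⟩ := Set.not_subset.mp hsub
      have hul : u l ≠ 0 := Finsupp.mem_support_iff.mp hlu
      have hudec : (u - Finsupp.single l 1) + Finsupp.single l 1 = u := by
        ext q
        simp only [Finsupp.add_apply, Finsupp.coe_tsub, Pi.sub_apply, Finsupp.single_apply]
        split_ifs with hq
        · subst hq; omega
        · omega
      have hXl : (X l : MvPolynomial (Fin n) k) = monomial (Finsupp.single l 1) 1 := rfl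
      have hmonsplit : (monomial u (1:k) : MvPolynomial (Fin n) k)
          = monomial (u - Finsupp.single l 1) 1 * X l := by
        rw [hXl, monomial_mul, mul_one, hudec]
      rw [hmonsplit, mul_smul]
      have h1 := lemA gr hgr_internal hgr_compat m G d hSD hdeg hsf hG hord i l hlG
      have h2 : ((LinearMap.lsmul (MvPolynomial (Fin n) k) M
            (monomial (u - Finsupp.single l 1) (1:k))).restrictScalars k)
            ((X l : MvPolynomial (Fin n) k) • m i)
          ∈ Submodule.map ((LinearMap.lsmul (MvPolynomial (Fin n) k) M
              (monomial (u - Finsupp.single l 1) (1:k))).restrictScalars k)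
            (Submodule.span k (m '' {i' : Fin p | (i' : ℕ) < (i : ℕ)})) :=
        Submodule.mem_map_of_mem h1
      rw [Submodule.map_span] at h2
      have h3 : Submodule.span k (((LinearMap.lsmul (MvPolynomial (Fin n) k) M
            (monomial (u - Finsupp.single l 1) (1:k))).restrictScalars k) ''
            (m '' {i' : Fin p | (i' : ℕ) < (i : ℕ)}))
          ≤ Tle k n M m G ((i : ℕ) + 1) := by
        rw [Submodule.span_le]
        rintro x ⟨y, ⟨i', hi', rfl⟩, rfl⟩
        have hi'' : (i' : ℕ) < (i : ℕ) := hi'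
        have h4 := ih i' (by omega) (u - Finsupp.single l 1)
        exact SetLike.mem_coe.mpr (Tle_mono m G (by omega) h4)
      exact h3 h2

end StanleyAux


set_option maxHeartbeats 1000000 in
open MvPolynomial Paper in
theorem stmt_10 {k : Type} [Field k] {n : ℕ}
    (M : Type) [AddCommGroup M] [Module (MvPolynomial (Fin n) k) M]
    [Module k M] [IsScalarTower k (MvPolynomial (Fin n) k) M]
    [Module.Finite (MvPolynomial (Fin n) k) M]
    -- `gr` is the `ℤⁿ`-grading of `M`
    (gr : (Fin n → ℤ) → Submodule k M)
    (hgr_internal : DirectSum.IsInternal gr)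
    (hgr_compat : ∀ (j : Fin n) (a : Fin n → ℤ), ∀ x ∈ gr a,
      (X j : MvPolynomial (Fin n) k) • x ∈ gr (a + eZ n j))
    -- a Stanley decomposition `{(m i, G i)}` of `M` …
    {p : ℕ} (m : Fin p → M) (G : Fin p → Set (Fin n)) (d : Fin p → (Fin n → ℤ))
    (hSD : IsStanleyDecomposition k n M m G)
    -- … by homogeneous elements `m i` of degree `d i`,
    (hdeg : ∀ i, m i ∈ gr (d i))
    -- with `(d i)⁺` square-free,
    (hsf : ∀ i l, d i l ≤ 1)
    -- `G i = supp ((d i)⁺)`,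
    (hG : ∀ i, G i = {l | 0 < d i l})
    -- and the pairs ordered by weakly decreasing total degree:
    (hord : ∀ i j : Fin p, i ≤ j → (∑ l, d j l) ≤ (∑ l, d i l)) :
    -- Then, with `M⁽ʲ⁾ = R m_1 + ⋯ + R m_j`, there is a short exact sequence
    -- `0 → M⁽ʲ⁻¹⁾ → M⁽ʲ⁾ → k[G j](-d j) → 0`, where the quotient
    -- `M⁽ʲ⁾/M⁽ʲ⁻¹⁾ ≅ k[G j](-d j) = (R/(x_l : l ∉ G j))(-d j)` is the free
    -- `k[G j]`-module on the class of `m j`: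
    ∀ j : Fin p,
      partialSpan k n M m (j : ℕ) ≤ partialSpan k n M m ((j : ℕ) + 1) ∧
      ∃ (hm : m j ∈ partialSpan k n M m ((j : ℕ) + 1))
        (e : (partialSpan k n M m ((j : ℕ) + 1) ⧸
              Submodule.comap (partialSpan k n M m ((j : ℕ) + 1)).subtype
                (partialSpan k n M m (j : ℕ))) ≃ₗ[MvPolynomial (Fin n) k]
            (MvPolynomial (Fin n) k ⧸
              Ideal.span {f : MvPolynomial (Fin n) k | ∃ l, l ∉ G j ∧ f = X l})),
        e (Submodule.Quotient.mk ⟨m j, hm⟩) =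
          Submodule.Quotient.mk (1 : MvPolynomial (Fin n) k) := by
  classical
  intro j
  have hmono : partialSpan k n M m (j : ℕ) ≤ partialSpan k n M m ((j : ℕ) + 1) := by
    apply Submodule.span_mono
    apply Set.image_mono
    intro i hi
    simp only [Set.mem_setOf_eq] at hi ⊢
    omega
  have hm : m j ∈ partialSpan k n M m ((j : ℕ) + 1) :=
    Submodule.subset_span ⟨j, by simp, rfl⟩
  have hKey : ∀ (i : Fin p) (u : Fin n →₀ ℕ),
      (monomial u (1:k) : MvPolynomial (Fin n) k) • m i ∈ Tle k n M m G ((i:ℕ)+1) :=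
    fun i u => lemKey gr hgr_internal hgr_compat m G d hSD hdeg hsf hG hord
      ((i:ℕ)+1) i (by omega) u
  have hTle_smul : ∀ (N : ℕ) (u : Fin n →₀ ℕ) (c : k) (x : M), x ∈ Tle k n M m G N →
      (monomial u c : MvPolynomial (Fin n) k) • x ∈ Tle k n M m G N := by
    intro N u c x hx
    induction hx using Submodule.span_induction with
    | mem y hy =>
      simp only [Set.mem_iUnion, GenSet, Set.mem_setOf_eq] at hy
      obtain ⟨i, hi, v, hv, rfl⟩ := hy
      have h1 : (monomial u c : MvPolynomial (Fin n) k) •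
            ((monomial v (1:k) : MvPolynomial (Fin n) k) • m i)
          = c • ((monomial (u + v) (1:k) : MvPolynomial (Fin n) k) • m i) := by
        rw [← mul_smul, monomial_mul, mul_one, ← smul_assoc, smul_monomial, smul_eq_mul, mul_one]
      rw [h1]
      exact Submodule.smul_mem _ _ (Tle_mono m G (by omega) (hKey i (u + v)))
    | zero => rw [smul_zero]; exact Submodule.zero_mem _
    | add y z hy hz ihy ihz => rw [smul_add]; exact Submodule.add_mem _ ihy ihz
    | smul a y hy ihy => rw [smul_comm]; exact Submodule.smul_mem _ _ ihy
  have hR_smul : ∀ (N : ℕ) (r : MvPolynomial (Fin n) k) (x : M), x ∈ Tle k n M m G N →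
      r • x ∈ Tle k n M m G N := by
    intro N r x hx
    have h1 : r • x = ∑ v ∈ r.support, (monomial v (coeff v r) : MvPolynomial (Fin n) k) • x := by
      conv_lhs => rw [r.as_sum]
      rw [Finset.sum_smul]
    rw [h1]
    exact Submodule.sum_mem _ fun v _ => hTle_smul N v _ x hx
  have hPS : ∀ (N : ℕ) (x : M), x ∈ partialSpan k n M m N → x ∈ Tle k n M m G N := by
    intro N x hx
    induction hx using Submodule.span_induction with
    | mem y hy =>
      obtain ⟨i, hi, rfl⟩ := hy
      refine Submodule.subset_span (Set.mem_iUnion₂.mpr ⟨i, hi, ?_⟩)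
      exact ⟨0, by simp, by simp [monomial_zero']⟩
    | zero => exact Submodule.zero_mem _
    | add y z hy hz ihy ihz => exact Submodule.add_mem _ ihy ihz
    | smul a y hy ihy => exact hR_smul N a y ihy
  have hSpanK : ∀ (N : ℕ) (x : M), x ∈ Submodule.span k (m '' {i : Fin p | (i:ℕ) < N}) →
      x ∈ partialSpan k n M m N := by
    intro N x hx
    have h1 : Submodule.span k (m '' {i : Fin p | (i:ℕ) < N}) ≤
        (partialSpan k n M m N).restrictScalars k :=
      Submodule.span_le.mpr fun y hy => Submodule.subset_span hy
    exact h1 hx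
  have hXmem : ∀ l : Fin n, l ∉ G j →
      (X l : MvPolynomial (Fin n) k) • m j ∈ partialSpan k n M m (j:ℕ) :=
    fun l hl => hSpanK _ _ (lemA gr hgr_internal hgr_compat m G d hSD hdeg hsf hG hord j l hl)
  set I := Ideal.span {f : MvPolynomial (Fin n) k | ∃ l, l ∉ G j ∧ f = X l} with hI
  have hIdeal : ∀ f ∈ I, f • m j ∈ partialSpan k n M m (j:ℕ) := by
    intro f hf
    rw [hI] at hf
    induction hf using Submodule.span_induction with
    | mem g hg =>
      obtain ⟨l, hl, rfl⟩ := hg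
      exact hXmem l hl
    | zero => rw [zero_smul]; exact Submodule.zero_mem _
    | add y z hy hz ihy ihz => rw [add_smul]; exact Submodule.add_mem _ ihy ihz
    | smul a g hg ihg => rw [smul_eq_mul, mul_smul]; exact Submodule.smul_mem _ _ ihg
  set P := partialSpan k n M m ((j:ℕ)+1) with hP
  set K := Submodule.comap P.subtype (partialSpan k n M m (j:ℕ)) with hK
  set φ : MvPolynomial (Fin n) k →ₗ[MvPolynomial (Fin n) k] (P ⧸ K) :=
    K.mkQ.comp (LinearMap.toSpanSingleton (MvPolynomial (Fin n) k) P ⟨m j, hm⟩) with hφ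
  have hφapp : ∀ f : MvPolynomial (Fin n) k,
      φ f = Submodule.Quotient.mk (⟨f • m j, Submodule.smul_mem P f hm⟩ : P) := by
    intro f
    rw [hφ]
    rfl
  have hφker : ∀ f : MvPolynomial (Fin n) k,
      φ f = 0 ↔ f • m j ∈ partialSpan k n M m (j:ℕ) := by
    intro f
    rw [hφapp, Submodule.Quotient.mk_eq_zero]
    rw [hK]
    exact Iff.rfl
  have hker : LinearMap.ker φ = I := by
    ext f
    rw [LinearMap.mem_ker, hφker]
    constructor
    · intro hf
      have hfs : f = (∑ u ∈ f.support.filter (fun u => ↑u.support ⊆ G j),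
            monomial u (coeff u f))
          + ∑ u ∈ f.support.filter (fun u => ¬ ↑u.support ⊆ G j),
            monomial u (coeff u f) := by
        rw [Finset.sum_filter_add_sum_filter_not]
        exact f.as_sum
      have hhI : (∑ u ∈ f.support.filter (fun u => ¬ ↑u.support ⊆ G j),
          monomial u (coeff u f)) ∈ I := by
        refine Submodule.sum_mem _ fun u hu => ?_
        obtain ⟨l, hlu, hlG⟩ := Set.not_subset.mp (Finset.mem_filter.mp hu).2
        have hul : u l ≠ 0 := Finsupp.mem_support_iff.mp hlu
        have hudec : (u - Finsupp.single l 1) + Finsupp.single l 1 = u := by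
          ext q
          simp only [Finsupp.add_apply, Finsupp.coe_tsub, Pi.sub_apply, Finsupp.single_apply]
          split_ifs with hq
          · subst hq; omega
          · omega
        have h1 : (monomial u (coeff u f) : MvPolynomial (Fin n) k)
            = monomial (u - Finsupp.single l 1) (coeff u f) * X l := by
          have hXl : (X l : MvPolynomial (Fin n) k) = monomial (Finsupp.single l 1) 1 := rfl
          rw [hXl, monomial_mul, mul_one, hudec]
        rw [h1, hI]
        exact Ideal.mul_mem_left _ _ (Ideal.subset_span ⟨l, hlG, rfl⟩)
      have hgP : (∑ u ∈ f.support.filter (fun u => ↑u.support ⊆ G j),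
          monomial u (coeff u f)) • m j ∈ partialSpan k n M m (j:ℕ) := by
        have h2 : f • m j = (∑ u ∈ f.support.filter (fun u => ↑u.support ⊆ G j),
              monomial u (coeff u f)) • m j
            + (∑ u ∈ f.support.filter (fun u => ¬ ↑u.support ⊆ G j),
                monomial u (coeff u f)) • m j := by
          conv_lhs => rw [hfs]
          rw [add_smul]
        have h2' : (∑ u ∈ f.support.filter (fun u => ↑u.support ⊆ G j),
              monomial u (coeff u f)) • m j
            = f • m j - (∑ u ∈ f.support.filter (fun u => ¬ ↑u.support ⊆ G j),
                monomial u (coeff u f)) • m j := by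
          rw [h2]; abel
        rw [h2']
        exact Submodule.sub_mem _ hf (hIdeal _ hhI)
      have hsum_eq : (∑ u ∈ f.support.filter (fun u => ↑u.support ⊆ G j),
            monomial u (coeff u f)) • m j
          = ∑ u ∈ f.support.filter (fun u => ↑u.support ⊆ G j),
              coeff u f • ((monomial u (1:k) : MvPolynomial (Fin n) k) • m j) := by
        rw [Finset.sum_smul]
        refine Finset.sum_congr rfl fun u _ => ?_
        rw [← smul_assoc, smul_monomial, smul_eq_mul, mul_one]
      have hgSS : (∑ u ∈ f.support.filter (fun u => ↑u.support ⊆ G j),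
          monomial u (coeff u f)) • m j ∈ stanleySpan k n M (m j) (G j) := by
        rw [hsum_eq]
        refine Submodule.sum_mem _ fun u hu => ?_
        exact Submodule.smul_mem _ _
          (Submodule.subset_span ⟨u, (Finset.mem_filter.mp hu).2, rfl⟩)
      have hgiSup : (∑ u ∈ f.support.filter (fun u => ↑u.support ⊆ G j),
          monomial u (coeff u f)) • m j
          ∈ ⨆ (i : Fin p) (_ : i ≠ j), stanleySpan k n M (m i) (G i) := by
        have h3 := hPS (j:ℕ) _ hgP
        have h4 : Tle k n M m G (j:ℕ) ≤
            ⨆ (i : Fin p) (_ : i ≠ j), stanleySpan k n M (m i) (G i) := by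
          rw [Tle, Submodule.span_le]
          intro x hx
          simp only [Set.mem_iUnion] at hx
          obtain ⟨i, hi, hxG⟩ := hx
          have hij : i ≠ j := fun h => by subst h; omega
          exact Submodule.mem_iSup_of_mem i
            (Submodule.mem_iSup_of_mem hij (Submodule.subset_span hxG))
        exact h4 h3
      have hg0 : (∑ u ∈ f.support.filter (fun u => ↑u.support ⊆ G j),
          monomial u (coeff u f)) • m j = 0 :=
        Submodule.disjoint_def.mp (hSD.2.submodule_iSupIndep (i := j)) _ hgSS hgiSup
      have hs_empty : f.support.filter (fun u => ↑u.support ⊆ G j) = ∅ := by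
        rw [Finset.eq_empty_iff_forall_notMem]
        intro u0 hu0
        have hsum0 : ∑ u ∈ f.support.filter (fun u => ↑u.support ⊆ G j),
            coeff u f • ((monomial u (1:k) : MvPolynomial (Fin n) k) • m j) = 0 := by
          rw [← hsum_eq]; exact hg0
        have hz2 : coeff u0 f • ((monomial u0 (1:k) : MvPolynomial (Fin n) k) • m j)
            = - ∑ u ∈ (f.support.filter (fun u => ↑u.support ⊆ G j)).erase u0,
                coeff u f • ((monomial u (1:k) : MvPolynomial (Fin n) k) • m j) := by
          have h5 := Finset.add_sum_erase (f.support.filter (fun u => ↑u.support ⊆ G j))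
            (fun u => coeff u f • ((monomial u (1:k) : MvPolynomial (Fin n) k) • m j)) hu0
          rw [eq_neg_iff_add_eq_zero]
          exact h5.trans hsum0
        have hz1 : coeff u0 f • ((monomial u0 (1:k) : MvPolynomial (Fin n) k) • m j)
            ∈ gr (fun q => d j q + (u0 q : ℤ)) :=
          Submodule.smul_mem _ _ (gr_mon gr hgr_compat u0 _ _ (hdeg j))
        have hz3 : coeff u0 f • ((monomial u0 (1:k) : MvPolynomial (Fin n) k) • m j)
            ∈ ⨆ (a : Fin n → ℤ) (_ : a ≠ (fun q => d j q + (u0 q : ℤ))), gr a := by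
          rw [hz2]
          refine Submodule.neg_mem _ (Submodule.sum_mem _ fun u hu => ?_)
          have hneq : (fun q => d j q + (u q : ℤ)) ≠ (fun q => d j q + (u0 q : ℤ)) := by
            intro h
            apply (Finset.mem_erase.mp hu).1
            ext q
            have h6 := congrFun h q
            omega
          exact Submodule.mem_iSup_of_mem _ (Submodule.mem_iSup_of_mem hneq
            (Submodule.smul_mem _ _ (gr_mon gr hgr_compat u _ _ (hdeg j))))
        have hz0 := Submodule.disjoint_def.mp
          (hgr_internal.submodule_iSupIndep (i := fun q => d j q + (u0 q : ℤ))) _ hz1 hz3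
        rcases smul_eq_zero.mp hz0 with h | h
        · exact (MvPolynomial.mem_support_iff.mp (Finset.mem_filter.mp hu0).1) h
        · exact hSD.1 j u0 (Finset.mem_filter.mp hu0).2 h
      have h5 : f = ∑ u ∈ f.support.filter (fun u => ¬ ↑u.support ⊆ G j),
          monomial u (coeff u f) := by
        conv_lhs => rw [hfs]
        rw [hs_empty, Finset.sum_empty, zero_add]
      rw [h5]
      exact hhI
    · intro hf
      exact hIdeal f hf
  have hsurj : Function.Surjective φ := by
    have hrange : ∀ (x : M) (hx : x ∈ P),
        Submodule.Quotient.mk (⟨x, hx⟩ : P) ∈ LinearMap.range φ := by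
      intro x hx
      induction hx using Submodule.span_induction with
      | mem y hy =>
        obtain ⟨i, hi, rfl⟩ := hy
        have hi' : (i : ℕ) < (j:ℕ) + 1 := hi
        by_cases hij : (i:ℕ) < (j:ℕ)
        · have h6 : ∀ (hmem : m i ∈ P),
              (Submodule.Quotient.mk (⟨m i, hmem⟩ : P) : P ⧸ K) = 0 := by
            intro hmem
            rw [Submodule.Quotient.mk_eq_zero]
            show m i ∈ partialSpan k n M m (j:ℕ)
            exact Submodule.subset_span ⟨i, hij, rfl⟩
          convert Submodule.zero_mem (LinearMap.range φ)
          exact h6 _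
        · have hij' : i = j := Fin.ext (by omega)
          subst hij'
          exact LinearMap.mem_range.mpr ⟨1, by
            rw [hφapp]
            exact congrArg Submodule.Quotient.mk (Subtype.ext (one_smul _ _))⟩
      | zero => exact Submodule.zero_mem _
      | add y z hy hz ihy ihz =>
        show Submodule.Quotient.mk ((⟨y, hy⟩ : P) + ⟨z, hz⟩) ∈ LinearMap.range φ
        rw [Submodule.Quotient.mk_add]
        exact Submodule.add_mem _ ihy ihz
      | smul a y hy ihy =>
        show Submodule.Quotient.mk (a • (⟨y, hy⟩ : P)) ∈ LinearMap.range φ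
        rw [Submodule.Quotient.mk_smul]
        exact Submodule.smul_mem _ _ ihy
    intro q
    obtain ⟨y, rfl⟩ := Submodule.Quotient.mk_surjective K q
    exact LinearMap.mem_range.mp (hrange y.1 y.2)
  refine ⟨hmono, hm,
    (LinearMap.quotKerEquivOfSurjective φ hsurj).symm.trans
      (Submodule.quotEquivOfEq _ I hker), ?_⟩
  have h7 : (LinearMap.quotKerEquivOfSurjective φ hsurj)
      (Submodule.Quotient.mk (1 : MvPolynomial (Fin n) k)) = φ 1 := rfl
  have h8 : (Submodule.Quotient.mk (⟨m j, hm⟩ : P) : P ⧸ K) = φ 1 := by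
    rw [hφapp]
    exact congrArg Submodule.Quotient.mk (Subtype.ext (one_smul _ _).symm)
  rw [LinearEquiv.trans_apply, h8, ← h7, LinearEquiv.symm_apply_apply,
    Submodule.quotEquivOfEq_mk]
end

section
/- Let $I \subseteq R = k[x_1,\ldots,x_n]$ be a monomial ideal and $\omega_R = R(-\mathbf{e}_{[n]})$. For each $F \subseteq [n]$, let $\mathcal{M}^i_F$ be a multigraded $k$-basis of $\bigoplus_{\mathbf{a} \in \mathbb{N}^n,\ \mathrm{supp}(\mathbf{a}) \cap F = \varnothing} \mathrm{Ext}^i_R(R/I,\omega_R)_{\mathbf{e}_F - \mathbf{a}}$, and set $\mathcal{S}_i = \{(m, \{x_l : l \in F\}) : F \subseteq [n],\ m \in \mathcal{M}^i_F\}$. Then $\mathcal{S}_i$ is a Stanley decomposition of $\mathrm{Ext}^i_R(R/I,\omega_R)$, i.e., $\mathrm{Ext}^i_R(R/I,\omega_R) = \bigoplus_{(m,G) \in \mathcal{S}_i} k[G]m$ as $k$-vector spaces, with each $k[G]m$ a Stanley space. -/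
/-!
Common definitions: `ℤⁿ`-graded modules over `R = k[x_1, …, x_n]`, Stanley
decompositions, the Čech complex on `x_1, …, x_n` (computing local cohomology
`H^i_𝔪` and, via the standard characterization, Castelnuovo–Mumford regularity),
and `Ext^i_R(R/I, ω_R)` for a monomial ideal `I`, computed with its natural
`ℤⁿ`-grading from the Taylor complex, which is a graded free resolution of `R/I`
on a chosen set of monomial generators of `I`.
-/

open MvPolynomial

namespace StanleyAux

open MvPolynomial Paper

variable {k : Type} [Field k] {n : ℕ}

/-- Homogeneity of multidegree `b`. -/
def Homog (b : Fin n → ℤ) (p : MvPolynomial (Fin n) k) : Prop :=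
  ∀ s ∈ p.support, ∀ i, (s i : ℤ) = b i

lemma homog_zero (b : Fin n → ℤ) : Homog b (0 : MvPolynomial (Fin n) k) := by
  intro s hs; simp at hs

lemma homog_add {b : Fin n → ℤ} {p q : MvPolynomial (Fin n) k}
    (hp : Homog b p) (hq : Homog b q) : Homog b (p + q) := by
  intro s hs i
  rcases Finset.mem_union.1 (MvPolynomial.support_add hs) with h | h
  · exact hp s h i
  · exact hq s h i

lemma homog_smul {b : Fin n → ℤ} {c : k} {p : MvPolynomial (Fin n) k}
    (hp : Homog b p) : Homog b (c • p) := by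
  intro s hs i
  exact hp s (MvPolynomial.support_smul hs) i

/-- Homogeneous polynomials of degree `b` as a submodule. -/
def homogSub (b : Fin n → ℤ) : Submodule k (MvPolynomial (Fin n) k) where
  carrier := {p | Homog b p}
  add_mem' := homog_add
  zero_mem' := homog_zero b
  smul_mem' := fun c _ hp => homog_smul (c := c) hp

lemma homog_monomial {s : Fin n →₀ ℕ} {c : k} {b : Fin n → ℤ}
    (h : ∀ i, (s i : ℤ) = b i) : Homog b (monomial s c) := by
  intro t ht i
  classical
  rw [MvPolynomial.support_monomial] at ht
  split at ht
  · simp at ht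
  · rw [Finset.mem_singleton] at ht; subst ht; exact h i

lemma mem_RPiece_iff {b : Fin n → ℤ} {p : MvPolynomial (Fin n) k} :
    p ∈ RPiece k n b ↔ Homog b p := by
  constructor
  · intro hp
    have : RPiece k n b ≤ homogSub b := by
      rw [RPiece, Submodule.span_le]
      rintro g ⟨c, s, hs, rfl⟩
      exact homog_monomial hs
    exact this hp
  · intro hp
    rw [← MvPolynomial.support_sum_monomial_coeff p]
    refine Submodule.sum_mem _ fun v hv => Submodule.subset_span ⟨coeff v p, v, fun i => hp v hv i, rfl⟩

/-- The exponent corresponding to a (componentwise nonnegative) multidegree. -/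
noncomputable def bexp (b : Fin n → ℤ) : Fin n →₀ ℕ :=
  Finsupp.equivFunOnFinite.symm fun i => (b i).toNat

@[simp] lemma bexp_apply (b : Fin n → ℤ) (i : Fin n) : bexp b i = (b i).toNat := rfl

lemma bexp_of_cast {s : Fin n →₀ ℕ} {b : Fin n → ℤ} (h : ∀ i, (s i : ℤ) = b i) :
    bexp b = s := by
  ext i
  rw [bexp_apply, ← h i, Int.toNat_natCast]

/-- Coefficient extraction as a `k`-linear map. -/
noncomputable def lcoeffMv (s : Fin n →₀ ℕ) : MvPolynomial (Fin n) k →ₗ[k] k where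
  toFun := coeff s
  map_add' := fun p q => coeff_add s p q
  map_smul' := fun c p => coeff_smul s c p

open Classical in
/-- Projection onto the homogeneous component of multidegree `b`. -/
noncomputable def compRL (b : Fin n → ℤ) :
    MvPolynomial (Fin n) k →ₗ[k] MvPolynomial (Fin n) k :=
  if (∀ i, 0 ≤ b i) then
    (monomial (R := k) (bexp b)).comp (lcoeffMv (bexp b))
  else 0

lemma compRL_apply_of_nonneg {b : Fin n → ℤ} (hb : ∀ i, 0 ≤ b i) (p : MvPolynomial (Fin n) k) :
    compRL b p = monomial (bexp b) (coeff (bexp b) p) := by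
  rw [compRL, if_pos hb]; rfl

lemma compRL_apply_of_neg {b : Fin n → ℤ} (hb : ¬ (∀ i, 0 ≤ b i)) (p : MvPolynomial (Fin n) k) :
    compRL b p = 0 := by
  rw [compRL, if_neg hb]; rfl

lemma homog_compRL (b : Fin n → ℤ) (p : MvPolynomial (Fin n) k) : Homog b (compRL b p) := by
  by_cases hb : ∀ i, 0 ≤ b i
  · rw [compRL_apply_of_nonneg hb]
    exact homog_monomial fun i => by rw [bexp_apply, Int.toNat_of_nonneg (hb i)]
  · rw [compRL_apply_of_neg hb]; exact homog_zero b

lemma eq_monomial_of_homog {b : Fin n → ℤ} {p : MvPolynomial (Fin n) k} (hp : Homog b p)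
    {s : Fin n →₀ ℕ} (hs : ∀ i, (s i : ℤ) = b i) : p = monomial s (coeff s p) := by
  apply MvPolynomial.ext
  intro t
  rw [coeff_monomial]
  by_cases ht : t = s
  · subst ht; rw [if_pos rfl]
  · rw [if_neg (fun h => ht h.symm)]
    by_contra hc
    have htsup : t ∈ p.support := by rwa [MvPolynomial.mem_support_iff]
    exact ht (Finsupp.ext fun i => Nat.cast_injective (by rw [hp t htsup i, hs i]))

lemma compRL_of_homog {b : Fin n → ℤ} {p : MvPolynomial (Fin n) k} (hp : Homog b p) :
    compRL b p = p := by
  by_cases h0 : p = 0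
  · subst h0; simp
  · obtain ⟨s, hs⟩ := (MvPolynomial.support_nonempty.2 h0)
    have hsb : ∀ i, (s i : ℤ) = b i := fun i => hp s hs i
    have hb : ∀ i, 0 ≤ b i := fun i => by rw [← hsb i]; exact Int.natCast_nonneg _
    rw [compRL_apply_of_nonneg hb, bexp_of_cast hsb]
    exact (eq_monomial_of_homog hp hsb).symm

lemma compRL_of_homog_ne {b b' : Fin n → ℤ} {p : MvPolynomial (Fin n) k}
    (hp : Homog b' p) (hne : b ≠ b') : compRL b p = 0 := by
  by_cases hb : ∀ i, 0 ≤ b i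
  · rw [compRL_apply_of_nonneg hb]
    have : coeff (bexp b) p = 0 := by
      by_contra hc
      have hm : bexp b ∈ p.support := by rwa [MvPolynomial.mem_support_iff]
      exact hne (funext fun i => by
        rw [← Int.toNat_of_nonneg (hb i), ← bexp_apply, hp _ hm i])
    rw [this, map_zero]
  · exact compRL_apply_of_neg hb p

lemma coeff_compRL (b : Fin n → ℤ) (p : MvPolynomial (Fin n) k) (t : Fin n →₀ ℕ) :
    coeff t (compRL b p) = if (∀ i, 0 ≤ b i) ∧ bexp b = t then coeff t p else 0 := by
  by_cases hb : ∀ i, 0 ≤ b i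
  · rw [compRL_apply_of_nonneg hb, coeff_monomial]
    by_cases ht : bexp b = t
    · subst ht; rw [if_pos rfl, if_pos ⟨hb, rfl⟩]
    · rw [if_neg ht, if_neg (fun h => ht h.2)]
  · rw [compRL_apply_of_neg hb]
    rw [if_neg (fun h => hb h.1)]
    simp

/-- Decomposition of a polynomial into its homogeneous components, relative to an
injective reindexing `B` of degrees. -/
lemma sum_compRL (B : (Fin n → ℤ) → (Fin n → ℤ))
    (hinj : ∀ a a', B a = B a' → a = a') (p : MvPolynomial (Fin n) k)
    (T : Finset (Fin n → ℤ))
    (hT : ∀ s ∈ p.support, ∃ a ∈ T, ∀ i, (s i : ℤ) = B a i) :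
    ∑ a ∈ T, compRL (B a) p = p := by
  apply MvPolynomial.ext
  intro t
  rw [MvPolynomial.coeff_sum]
  by_cases ht : t ∈ p.support
  · obtain ⟨a₀, ha₀T, ha₀⟩ := hT t ht
    have hb₀ : ∀ i, 0 ≤ B a₀ i := fun i => by rw [← ha₀ i]; exact Int.natCast_nonneg _
    rw [Finset.sum_eq_single_of_mem a₀ ha₀T]
    · rw [coeff_compRL, if_pos ⟨hb₀, bexp_of_cast ha₀⟩]
    · intro a haT hne
      rw [coeff_compRL]
      by_cases hcond : (∀ i, 0 ≤ B a i) ∧ bexp (B a) = t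
      · exfalso
        apply hne
        apply hinj
        funext i
        rw [← Int.toNat_of_nonneg (hcond.1 i), ← bexp_apply, hcond.2, ha₀ i]
      · rw [if_neg hcond]
  · have hpt : coeff t p = 0 := by rwa [← MvPolynomial.notMem_support_iff]
    rw [hpt]
    apply Finset.sum_eq_zero
    intro a _
    rw [coeff_compRL]
    split
    · exact hpt
    · rfl

lemma homog_monomial_mul {b : Fin n → ℤ} {p : MvPolynomial (Fin n) k} (hp : Homog b p)
    (m : Fin n →₀ ℕ) (c : k) :
    Homog (fun i => b i + (m i : ℤ)) (monomial m c * p) := by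
  intro s hs i
  rcases Finset.mem_add.1 (MvPolynomial.support_mul _ _ hs) with ⟨s₁, hs₁, s₂, hs₂, rfl⟩
  classical
  rw [MvPolynomial.support_monomial] at hs₁
  have hs₁' : s₁ = m := by
    split at hs₁
    · simp at hs₁
    · exact Finset.mem_singleton.1 hs₁
  subst hs₁'
  rw [Finsupp.add_apply]
  push_cast
  rw [hp s₂ hs₂ i]
  ring

lemma homog_div {b : Fin n → ℤ} {p : MvPolynomial (Fin n) k} (hp : Homog b p)
    {l : Fin n} (hl : 1 ≤ b l) :
    ∃ q : MvPolynomial (Fin n) k,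
      Homog (fun i => b i - ((Finsupp.single l 1 : Fin n →₀ ℕ) i : ℤ)) q ∧
        p = monomial (Finsupp.single l 1) (1 : k) * q := by
  by_cases h0 : p = 0
  · exact ⟨0, homog_zero _, by rw [h0, mul_zero]⟩
  obtain ⟨s, hs⟩ := (MvPolynomial.support_nonempty.2 h0)
  have hsb : ∀ i, (s i : ℤ) = b i := fun i => hp s hs i
  have hsl : 1 ≤ s l := by
    have := hsb l
    omega
  refine ⟨monomial (s - Finsupp.single l 1) (coeff s p), ?_, ?_⟩
  · apply homog_monomial
    intro i
    rw [Finsupp.tsub_apply]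
    by_cases hil : i = l
    · subst hil
      rw [Finsupp.single_eq_same]
      push_cast [Nat.cast_sub hsl]
      rw [hsb i]
    · rw [Finsupp.single_eq_of_ne' (fun h => hil h.symm)]
      simp [hsb i]
  · rw [monomial_mul, one_mul]
    have : Finsupp.single l 1 + (s - Finsupp.single l 1) = s := by
      apply add_tsub_cancel_of_le
      rw [Finsupp.single_le_iff]
      exact hsl
    rw [this]
    exact eq_monomial_of_homog hp hsb

lemma monomial_mul_cancel {m : Fin n →₀ ℕ} {p q : MvPolynomial (Fin n) k}
    (h : monomial m (1 : k) * p = monomial m (1 : k) * q) : p = q := by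
  have hm : (monomial m (1 : k)) ≠ 0 := by
    rw [Ne, MvPolynomial.monomial_eq_zero]
    exact one_ne_zero
  exact mul_left_cancel₀ hm h

section Cochain

variable {r : ℕ} (u : Fin r → (Fin n →₀ ℕ))

/-- The degree of the `S`-component of a degree-`a` cochain. -/
noncomputable def zdeg (S : Finset (Fin r)) (a : Fin n → ℤ) : Fin n → ℤ :=
  fun i => a i + (lcmExp n u S i : ℤ) - 1

lemma zdeg_inj {S : Finset (Fin r)} {a a' : Fin n → ℤ}
    (h : ∀ i, zdeg u S a i = zdeg u S a' i) : a = a' := by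
  funext i
  have := h i
  unfold zdeg at this
  omega

lemma lcmExp_mono {S S' : Finset (Fin r)} (h : S ⊆ S') (i : Fin n) :
    lcmExp n u S i ≤ lcmExp n u S' i :=
  Finset.sup_mono h

lemma mem_taylorPiece_iff {s : ℕ} {a : Fin n → ℤ} {c : TaylorDual k n (r := r) s} :
    c ∈ taylorPiece k n u s a ↔ ∀ S : {S : Finset (Fin r) // S.card = s}, Homog (zdeg u S.1 a) (c S) := by
  rw [taylorPiece, Submodule.mem_pi]
  constructor
  · intro h S
    exact mem_RPiece_iff.1 (h S (Set.mem_univ S))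
  · intro h S _
    exact mem_RPiece_iff.2 (h S)

/-- Projection of a cochain onto its multidegree-`a` component. -/
noncomputable def compC (s : ℕ) (a : Fin n → ℤ) :
    TaylorDual k n (r := r) s →ₗ[k] TaylorDual k n (r := r) s :=
  LinearMap.pi fun S => (compRL (zdeg u S.1 a)).comp (LinearMap.proj S)

@[simp] lemma compC_apply {s : ℕ} (a : Fin n → ℤ) (c : TaylorDual k n (r := r) s)
    (S : {S : Finset (Fin r) // S.card = s}) :
    compC u s a c S = compRL (zdeg u S.1 a) (c S) := rfl

lemma compC_mem {s : ℕ} (a : Fin n → ℤ) (c : TaylorDual k n (r := r) s) :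
    compC u s a c ∈ taylorPiece k n u s a := by
  rw [mem_taylorPiece_iff]
  intro S
  exact homog_compRL _ _

lemma compC_of_mem {s : ℕ} {a : Fin n → ℤ} {c : TaylorDual k n (r := r) s}
    (hc : c ∈ taylorPiece k n u s a) : compC u s a c = c := by
  rw [mem_taylorPiece_iff] at hc
  funext S
  rw [compC_apply, compRL_of_homog (hc S)]

lemma compC_of_mem_ne {s : ℕ} {a a' : Fin n → ℤ} {c : TaylorDual k n (r := r) s}
    (hc : c ∈ taylorPiece k n u s a') (hne : a ≠ a') : compC u s a c = 0 := by
  rw [mem_taylorPiece_iff] at hc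
  funext S
  rw [compC_apply, compRL_of_homog_ne (hc S) (fun h => hne (zdeg_inj u (fun i => congrFun h i)))]
  rfl

open Classical in
/-- The finite set of multidegrees appearing in a cochain. -/
noncomputable def degSet {s : ℕ} (c : TaylorDual k n (r := r) s) : Finset (Fin n → ℤ) :=
  Finset.univ.biUnion fun S : {S : Finset (Fin r) // S.card = s} =>
    (c S).support.image fun t => fun i => (t i : ℤ) - ((lcmExp n u S.1 i : ℤ) - 1)

lemma sum_compC {s : ℕ} (c : TaylorDual k n (r := r) s) (T : Finset (Fin n → ℤ))
    (hT : degSet u c ⊆ T) : ∑ a ∈ T, compC u s a c = c := by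
  classical
  funext S
  have happ : (∑ a ∈ T, compC u s a c) S = ∑ a ∈ T, compRL (zdeg u S.1 a) (c S) := by
    rw [Finset.sum_apply]
    simp only [compC_apply]
  rw [happ]
  apply sum_compRL (zdeg u S.1) (fun a a' h => zdeg_inj u (fun i => congrFun h i))
  intro t ht
  refine ⟨fun i => (t i : ℤ) - ((lcmExp n u S.1 i : ℤ) - 1), ?_, fun i => by unfold zdeg; ring⟩
  apply hT
  rw [degSet, Finset.mem_biUnion]
  exact ⟨S, Finset.mem_univ S, Finset.mem_image_of_mem _ ht⟩

lemma homog_finsetSum {β : Type*} (t : Finset β) (f : β → MvPolynomial (Fin n) k)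
    (b : Fin n → ℤ) (h : ∀ j ∈ t, Homog b (f j)) : Homog b (∑ j ∈ t, f j) :=
  Submodule.sum_mem (homogSub b) (fun j hj => (h j hj : f j ∈ homogSub b))

lemma taylorD_apply {s : ℕ} (c : TaylorDual k n (r := r) s)
    (S' : {S : Finset (Fin r) // S.card = s + 1}) :
    taylorD k n u s c S' = ∑ l ∈ S'.1.attach,
      (monomial (lcmExp n u S'.1 - lcmExp n u (S'.1.erase l.1))
          ((-1 : k) ^ ((S'.1.filter (fun x => x < l.1)).card)) : MvPolynomial (Fin n) k) *
        c ⟨S'.1.erase l.1, by rw [Finset.card_erase_of_mem l.2, S'.2]; rfl⟩ := by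
  simp [taylorD, LinearMap.sum_apply, smul_eq_mul]

lemma taylorD_mem_piece {s : ℕ} {a : Fin n → ℤ} {c : TaylorDual k n (r := r) s}
    (hc : c ∈ taylorPiece k n u s a) :
    taylorD k n u s c ∈ taylorPiece k n u (s + 1) a := by
  rw [mem_taylorPiece_iff] at hc ⊢
  intro S'
  rw [taylorD_apply]
  apply homog_finsetSum
  intro l _
  have h1 := hc ⟨S'.1.erase l.1, by rw [Finset.card_erase_of_mem l.2, S'.2]; rfl⟩
  have h2 := homog_monomial_mul h1
    (lcmExp n u S'.1 - lcmExp n u (S'.1.erase l.1))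
    ((-1 : k) ^ ((S'.1.filter (fun x => x < l.1)).card))
  have hdeg : (fun i => zdeg u (S'.1.erase l.1) a i +
      (((lcmExp n u S'.1 - lcmExp n u (S'.1.erase l.1)) i : ℕ) : ℤ)) = zdeg u S'.1 a := by
    funext i
    rw [Finsupp.tsub_apply, Nat.cast_sub (lcmExp_mono u (Finset.erase_subset _ _) i)]
    unfold zdeg
    ring
  rwa [hdeg] at h2

lemma taylorD_compC (s : ℕ) (a : Fin n → ℤ) (c : TaylorDual k n (r := r) s) :
    taylorD k n u s (compC u s a c) = compC u (s + 1) a (taylorD k n u s c) := by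
  classical
  have hdec : ∑ a' ∈ insert a (degSet u c), compC u s a' c = c :=
    sum_compC u c _ (Finset.subset_insert _ _)
  have hR : compC u (s + 1) a (taylorD k n u s c) =
      ∑ a' ∈ insert a (degSet u c), compC u (s + 1) a (taylorD k n u s (compC u s a' c)) := by
    conv_lhs => rw [← hdec]
    rw [map_sum (taylorD k n u s), map_sum (compC u (s + 1) a)]
  have h1 : compC u (s + 1) a (taylorD k n u s (compC u s a c)) =
      taylorD k n u s (compC u s a c) :=
    compC_of_mem u (taylorD_mem_piece u (compC_mem u a c))
  have h2 : ∀ a' ∈ insert a (degSet u c), a' ≠ a →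
      compC u (s + 1) a (taylorD k n u s (compC u s a' c)) = 0 := by
    intro a' _ hne
    exact compC_of_mem_ne u (taylorD_mem_piece u (compC_mem u a' c)) (Ne.symm hne)
  rw [hR, Finset.sum_eq_single_of_mem a (Finset.mem_insert_self _ _) h2, h1]

end Cochain


section Core

variable {r : ℕ} (u : Fin r → (Fin n →₀ ℕ))

lemma smul_comp {s : ℕ} (p : MvPolynomial (Fin n) k) (c : TaylorDual k n (r := r) s)
    (S : {S : Finset (Fin r) // S.card = s}) : (p • c) S = p * c S := rfl

lemma smul_mem_taylorPiece {s : ℕ} (m : Fin n →₀ ℕ) {a : Fin n → ℤ}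
    {c : TaylorDual k n (r := r) s} (hc : c ∈ taylorPiece k n u s a) :
    (monomial m (1 : k) : MvPolynomial (Fin n) k) • c ∈
      taylorPiece k n u s (fun j => a j + (m j : ℤ)) := by
  rw [mem_taylorPiece_iff] at hc ⊢
  intro S
  rw [smul_comp]
  have h2 := homog_monomial_mul (hc S) m (1 : k)
  have hdeg : (fun i => zdeg u S.1 a i + (m i : ℤ)) = zdeg u S.1 (fun j => a j + (m j : ℤ)) := by
    funext i
    unfold zdeg
    ring
  rwa [hdeg] at h2

lemma cochain_div {s : ℕ} {a : Fin n → ℤ} {l : Fin n} (hl : 1 ≤ a l)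
    {c : TaylorDual k n (r := r) s}
    (hc : c ∈ taylorPiece k n u s (fun j => a j + ((Finsupp.single l 1 : Fin n →₀ ℕ) j : ℤ))) :
    ∃ w, w ∈ taylorPiece k n u s a ∧
      c = (monomial (Finsupp.single l 1) (1 : k) : MvPolynomial (Fin n) k) • w := by
  rw [mem_taylorPiece_iff] at hc
  have key : ∀ S : {S : Finset (Fin r) // S.card = s}, ∃ q, Homog (zdeg u S.1 a) q ∧
      c S = monomial (Finsupp.single l 1) (1 : k) * q := by
    intro S
    have hsl : ((Finsupp.single l 1 : Fin n →₀ ℕ) l : ℤ) = 1 := by simp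
    have h1 : 1 ≤ zdeg u S.1 (fun j => a j + ((Finsupp.single l 1 : Fin n →₀ ℕ) j : ℤ)) l := by
      have h0 : (0 : ℤ) ≤ (lcmExp n u S.1 l : ℤ) := Int.natCast_nonneg _
      unfold zdeg
      simp only [Finsupp.single_eq_same, Nat.cast_one]
      omega
    obtain ⟨q, hq, hcq⟩ := homog_div (hc S) h1
    refine ⟨q, ?_, hcq⟩
    have hdeg : (fun i => zdeg u S.1 (fun j => a j + ((Finsupp.single l 1 : Fin n →₀ ℕ) j : ℤ)) i -
        ((Finsupp.single l 1 : Fin n →₀ ℕ) i : ℤ)) = zdeg u S.1 a := by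
      funext i
      unfold zdeg
      ring
    rwa [hdeg] at hq
  choose w hw hcw using key
  refine ⟨w, (mem_taylorPiece_iff u).2 hw, funext fun S => ?_⟩
  rw [smul_comp]
  exact hcw S

lemma cochain_smul_cancel {s : ℕ} {m : Fin n →₀ ℕ} {c c' : TaylorDual k n (r := r) s}
    (h : (monomial m (1 : k) : MvPolynomial (Fin n) k) • c =
      (monomial m (1 : k) : MvPolynomial (Fin n) k) • c') : c = c' := by
  funext S
  have := congrFun h S
  rw [smul_comp, smul_comp] at this
  exact monomial_mul_cancel this

lemma extB_of_smul_single {i : ℕ} {a : Fin n → ℤ} {l : Fin n} (ha : 1 ≤ a l)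
    {z : TaylorDual k n (r := r) i}
    (hp : z ∈ taylorPiece k n u i a)
    (hB : (monomial (Finsupp.single l 1) (1 : k) : MvPolynomial (Fin n) k) • z ∈ extB k n u i) :
    z ∈ extB k n u i := by
  cases i with
  | zero =>
    have h0 : (monomial (Finsupp.single l 1) (1 : k) : MvPolynomial (Fin n) k) • z = 0 := by
      simpa [extB] using hB
    have hz0 : z = 0 := by
      funext S
      have := congrFun h0 S
      rw [smul_comp] at this
      rcases mul_eq_zero.1 this with h | h
      · rw [MvPolynomial.monomial_eq_zero] at h
        exact absurd h one_ne_zero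
      · exact h
    simp [extB, hz0]
  | succ s =>
    obtain ⟨c, hc⟩ := hB
    have hmem : (monomial (Finsupp.single l 1) (1 : k) : MvPolynomial (Fin n) k) • z ∈
        taylorPiece k n u (s + 1) (fun j => a j + ((Finsupp.single l 1 : Fin n →₀ ℕ) j : ℤ)) :=
      smul_mem_taylorPiece u _ hp
    have hc' : taylorD k n u s
        (compC u s (fun j => a j + ((Finsupp.single l 1 : Fin n →₀ ℕ) j : ℤ)) c) =
        (monomial (Finsupp.single l 1) (1 : k) : MvPolynomial (Fin n) k) • z := by
      rw [taylorD_compC, hc, compC_of_mem u hmem]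
    obtain ⟨w, hw, hcw⟩ := cochain_div u ha (compC_mem u _ c)
    have hfin : (monomial (Finsupp.single l 1) (1 : k) : MvPolynomial (Fin n) k) •
        taylorD k n u s w = (monomial (Finsupp.single l 1) (1 : k) : MvPolynomial (Fin n) k) • z := by
      rw [← map_smul, ← hcw, hc']
    exact ⟨w, cochain_smul_cancel hfin⟩

lemma piece_surj_single {i : ℕ} {a : Fin n → ℤ} {l : Fin n} (ha : 1 ≤ a l)
    {z : TaylorDual k n (r := r) i} (hz : z ∈ extZ k n u i)
    (hp : z ∈ taylorPiece k n u i (fun j => a j + ((Finsupp.single l 1 : Fin n →₀ ℕ) j : ℤ))) :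
    ∃ w, w ∈ extZ k n u i ∧ w ∈ taylorPiece k n u i a ∧
      z = (monomial (Finsupp.single l 1) (1 : k) : MvPolynomial (Fin n) k) • w := by
  obtain ⟨w, hw, hzw⟩ := cochain_div u ha hp
  refine ⟨w, ?_, hw, hzw⟩
  rw [extZ, LinearMap.mem_ker] at hz ⊢
  have hfin : (monomial (Finsupp.single l 1) (1 : k) : MvPolynomial (Fin n) k) •
      taylorD k n u i w = (monomial (Finsupp.single l 1) (1 : k) : MvPolynomial (Fin n) k) • 0 := by
    rw [← map_smul, ← hzw, hz, smul_zero]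
  exact cochain_smul_cancel hfin

end Core

section Quot

variable {r : ℕ} (u : Fin r → (Fin n →₀ ℕ))

/-- The quotient map onto `Ext`, as a `k`-linear map. -/
noncomputable def Q (i : ℕ) : extZ k n u i →ₗ[k] ExtMod k n u i :=
  ((Submodule.comap (extZ k n u i).subtype
    (extB k n u i ⊓ extZ k n u i)).mkQ).restrictScalars k

lemma Q_eq_zero_iff {i : ℕ} {x : extZ k n u i} : Q u i x = 0 ↔ x.1 ∈ extB k n u i := by
  have hq : (Q u i x = 0) = ((Submodule.Quotient.mk x : extZ k n u i ⧸ (Submodule.comap (extZ k n u i).subtype (extB k n u i ⊓ extZ k n u i))) = 0) := rfl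
  rw [hq, Submodule.Quotient.mk_eq_zero, Submodule.mem_comap, Submodule.subtype_apply,
    Submodule.mem_inf]
  exact ⟨fun h => h.1, fun h => ⟨h, x.2⟩⟩

lemma Q_rsmul {i : ℕ} (p : MvPolynomial (Fin n) k) (x : extZ k n u i) :
    Q u i (p • x) = p • Q u i x :=
  map_smul (Submodule.mkQ _) p x

lemma mem_extPiece_iff {i : ℕ} {a : Fin n → ℤ} {y : ExtMod k n u i} :
    y ∈ extPiece k n u i a ↔
      ∃ x : extZ k n u i, x.1 ∈ taylorPiece k n u i a ∧ Q u i x = y := by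
  rw [extPiece]; erw [Submodule.mem_map]
  constructor
  · rintro ⟨x, hx, rfl⟩
    exact ⟨x, hx, rfl⟩
  · rintro ⟨x, hx, rfl⟩
    exact ⟨x, hx, rfl⟩

lemma smul_mem_extPiece {i : ℕ} (m : Fin n →₀ ℕ) {a : Fin n → ℤ} {y : ExtMod k n u i}
    (hy : y ∈ extPiece k n u i a) :
    (monomial m (1 : k) : MvPolynomial (Fin n) k) • y ∈
      extPiece k n u i (fun j => a j + (m j : ℤ)) := by
  rw [mem_extPiece_iff] at hy ⊢
  obtain ⟨x, hx, rfl⟩ := hy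
  refine ⟨(monomial m (1 : k) : MvPolynomial (Fin n) k) • x, ?_, (Q_rsmul u _ x).symm⟩
  exact smul_mem_taylorPiece u m hx

lemma extPiece_smul_single_eq_zero {i : ℕ} {a : Fin n → ℤ} {l : Fin n} (ha : 1 ≤ a l)
    {y : ExtMod k n u i} (hy : y ∈ extPiece k n u i a)
    (h0 : (monomial (Finsupp.single l 1) (1 : k) : MvPolynomial (Fin n) k) • y = 0) : y = 0 := by
  rw [mem_extPiece_iff] at hy
  obtain ⟨x, hx, rfl⟩ := hy
  rw [← Q_rsmul, Q_eq_zero_iff] at h0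
  rw [Q_eq_zero_iff]
  exact extB_of_smul_single u ha hx h0

lemma extPiece_smul_single_surj {i : ℕ} {a : Fin n → ℤ} {l : Fin n} (ha : 1 ≤ a l)
    {y : ExtMod k n u i}
    (hy : y ∈ extPiece k n u i (fun j => a j + ((Finsupp.single l 1 : Fin n →₀ ℕ) j : ℤ))) :
    ∃ x ∈ extPiece k n u i a,
      y = (monomial (Finsupp.single l 1) (1 : k) : MvPolynomial (Fin n) k) • x := by
  rw [mem_extPiece_iff] at hy
  obtain ⟨z, hz, rfl⟩ := hy
  obtain ⟨w, hwZ, hwP, hzw⟩ := piece_surj_single u ha z.2 hz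
  refine ⟨Q u i ⟨w, hwZ⟩, (mem_extPiece_iff u).2 ⟨⟨w, hwZ⟩, hwP, rfl⟩, ?_⟩
  rw [← Q_rsmul]
  congr 1
  exact Subtype.ext hzw

lemma finsupp_peel {m : Fin n →₀ ℕ} (hm : m ≠ 0) :
    ∃ (l : Fin n) (m' : Fin n →₀ ℕ), m'.support ⊆ m.support ∧
      m = m' + Finsupp.single l 1 ∧
      (m'.sum fun _ x => x) + 1 = m.sum fun _ x => x := by
  obtain ⟨l, hl⟩ := Finsupp.support_nonempty_iff.2 hm
  have hml : 1 ≤ m l := Nat.one_le_iff_ne_zero.2 (Finsupp.mem_support_iff.1 hl)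
  have hle : Finsupp.single l 1 ≤ m := Finsupp.single_le_iff.2 hml
  have heq : m = (m - Finsupp.single l 1) + Finsupp.single l 1 := (tsub_add_cancel_of_le hle).symm
  refine ⟨l, m - Finsupp.single l 1, ?_, heq, ?_⟩
  · intro j hj
    rw [Finsupp.mem_support_iff] at hj ⊢
    rw [Finsupp.tsub_apply] at hj
    omega
  · conv_rhs => rw [heq]
    rw [Finsupp.sum_add_index' (fun _ => rfl) (fun _ _ _ => rfl), Finsupp.sum_single_index rfl]

lemma monomial_zero_one : (monomial (0 : Fin n →₀ ℕ) (1 : k) : MvPolynomial (Fin n) k) = 1 := by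
  simp

lemma extPiece_smul_eq_zero_aux {i : ℕ} : ∀ (N : ℕ) (m : Fin n →₀ ℕ),
    (m.sum fun _ x => x) = N → ∀ {a : Fin n → ℤ}, (∀ l ∈ m.support, 1 ≤ a l) →
    ∀ {y : ExtMod k n u i}, y ∈ extPiece k n u i a →
    (monomial m (1 : k) : MvPolynomial (Fin n) k) • y = 0 → y = 0 := by
  intro N
  induction N using Nat.strong_induction_on with
  | _ N ih =>
    intro m hN a ha y hy h0
    by_cases hm0 : m = 0
    · subst hm0
      rwa [monomial_zero_one, one_smul] at h0
    · obtain ⟨l, m', hsupp, hm', hsum⟩ := finsupp_peel hm0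
      have hml : l ∈ m.support := by
        rw [Finsupp.mem_support_iff, hm', Finsupp.add_apply, Finsupp.single_eq_same]
        omega
      have hmon : (monomial m (1 : k) : MvPolynomial (Fin n) k) =
          monomial (Finsupp.single l 1) 1 * monomial m' 1 := by
        rw [monomial_mul, one_mul, hm', add_comm]
      rw [hmon, mul_smul] at h0
      have hy' : (monomial m' (1 : k) : MvPolynomial (Fin n) k) • y ∈
          extPiece k n u i (fun j => a j + (m' j : ℤ)) := smul_mem_extPiece u m' hy
      have h1 : 1 ≤ a l + (m' l : ℤ) := by
        have := ha l hml
        have h2 : (0 : ℤ) ≤ (m' l : ℤ) := Int.natCast_nonneg _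
        omega
      have hz' := extPiece_smul_single_eq_zero u (a := fun j => a j + (m' j : ℤ)) h1 hy' h0
      exact ih (m'.sum fun _ x => x) (by omega) m' rfl
        (fun l' hl' => ha l' (hsupp hl')) hy hz'

lemma extPiece_smul_eq_zero {i : ℕ} (m : Fin n →₀ ℕ) {a : Fin n → ℤ}
    (ha : ∀ l ∈ m.support, 1 ≤ a l) {y : ExtMod k n u i} (hy : y ∈ extPiece k n u i a)
    (h0 : (monomial m (1 : k) : MvPolynomial (Fin n) k) • y = 0) : y = 0 :=
  extPiece_smul_eq_zero_aux u _ m rfl ha hy h0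

lemma extPiece_smul_surj_aux {i : ℕ} : ∀ (N : ℕ) (m : Fin n →₀ ℕ),
    (m.sum fun _ x => x) = N → ∀ {a : Fin n → ℤ}, (∀ l ∈ m.support, 1 ≤ a l) →
    ∀ {y : ExtMod k n u i}, y ∈ extPiece k n u i (fun j => a j + (m j : ℤ)) →
    ∃ x ∈ extPiece k n u i a, y = (monomial m (1 : k) : MvPolynomial (Fin n) k) • x := by
  intro N
  induction N using Nat.strong_induction_on with
  | _ N ih =>
    intro m hN a ha y hy
    by_cases hm0 : m = 0
    · subst hm0
      have hdeg : (fun j => a j + (((0 : Fin n →₀ ℕ)) j : ℤ)) = a := by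
        funext j; simp
      rw [hdeg] at hy
      exact ⟨y, hy, by rw [monomial_zero_one, one_smul]⟩
    · obtain ⟨l, m', hsupp, hm', hsum⟩ := finsupp_peel hm0
      have hml : l ∈ m.support := by
        rw [Finsupp.mem_support_iff, hm', Finsupp.add_apply, Finsupp.single_eq_same]
        omega
      have hdeg : (fun j => a j + (m j : ℤ)) =
          (fun j => (fun j' => a j' + (m' j' : ℤ)) j +
            ((Finsupp.single l 1 : Fin n →₀ ℕ) j : ℤ)) := by
        funext j
        rw [hm', Finsupp.add_apply]
        push_cast
        ring
      rw [hdeg] at hy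
      have h1 : 1 ≤ a l + (m' l : ℤ) := by
        have := ha l hml
        have h2 : (0 : ℤ) ≤ (m' l : ℤ) := Int.natCast_nonneg _
        omega
      obtain ⟨x₁, hx₁, hyx₁⟩ := extPiece_smul_single_surj u (a := fun j' => a j' + (m' j' : ℤ)) h1 hy
      obtain ⟨x, hx, hx₁x⟩ := ih (m'.sum fun _ x => x) (by omega) m' rfl
        (fun l' hl' => ha l' (hsupp hl')) hx₁
      refine ⟨x, hx, ?_⟩
      rw [hyx₁, hx₁x, smul_smul, monomial_mul, one_mul, add_comm, ← hm']

lemma extPiece_smul_surj {i : ℕ} (m : Fin n →₀ ℕ) {a : Fin n → ℤ}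
    (ha : ∀ l ∈ m.support, 1 ≤ a l) {y : ExtMod k n u i}
    (hy : y ∈ extPiece k n u i (fun j => a j + (m j : ℤ))) :
    ∃ x ∈ extPiece k n u i a, y = (monomial m (1 : k) : MvPolynomial (Fin n) k) • x :=
  extPiece_smul_surj_aux u _ m rfl ha hy

end Quot


section Decomp

variable {r : ℕ} (u : Fin r → (Fin n →₀ ℕ))

lemma compC_mem_extZ {i : ℕ} {a : Fin n → ℤ} {z : TaylorDual k n (r := r) i}
    (hz : z ∈ extZ k n u i) : compC u i a z ∈ extZ k n u i := by
  rw [extZ, LinearMap.mem_ker] at hz ⊢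
  rw [taylorD_compC, hz, map_zero]

lemma compC_mem_extB {i : ℕ} {a : Fin n → ℤ} {z : TaylorDual k n (r := r) i}
    (hz : z ∈ extB k n u i) : compC u i a z ∈ extB k n u i := by
  cases i with
  | zero =>
    have hz0 : z = 0 := by simpa [extB] using hz
    simp [extB, hz0]
  | succ s =>
    obtain ⟨c, hc⟩ := hz
    exact ⟨compC u s a c, by rw [taylorD_compC, hc]⟩

lemma top_le_iSup_extPiece (i : ℕ) :
    (⊤ : Submodule k (ExtMod k n u i)) ≤ ⨆ a : Fin n → ℤ, extPiece k n u i a := by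
  intro y _
  obtain ⟨x, rfl⟩ := (Submodule.mkQ_surjective (Submodule.comap (extZ k n u i).subtype
    (extB k n u i ⊓ extZ k n u i))) y
  obtain ⟨z, hzZ⟩ := x
  have hdec : ∑ a ∈ degSet u z, compC u i a z = z := sum_compC u z _ (subset_refl _)
  have hX : (⟨z, hzZ⟩ : extZ k n u i) =
      ∑ a ∈ degSet u z, (⟨compC u i a z, compC_mem_extZ u hzZ⟩ : extZ k n u i) := by
    apply Subtype.ext
    rw [AddSubmonoidClass.coe_finset_sum]
    exact hdec.symm
  have hq : Submodule.mkQ _ (⟨z, hzZ⟩ : extZ k n u i) =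
      Q u i (⟨z, hzZ⟩ : extZ k n u i) := rfl
  rw [hq, hX, map_sum]
  apply Submodule.sum_mem
  intro a _
  exact Submodule.mem_iSup_of_mem a ((mem_extPiece_iff u).2 ⟨_, compC_mem u a z, rfl⟩)

lemma split_zero {i : ℕ} {ι' : Type} (s : Finset ι') (g : ι' → k)
    (w : ι' → TaylorDual k n (r := r) i) (deg : ι' → (Fin n → ℤ))
    (hwP : ∀ p, w p ∈ taylorPiece k n u i (deg p))
    (hsum : ∑ p ∈ s, g p • w p ∈ extB k n u i) (c₀ : Fin n → ℤ) :
    ∑ p ∈ s.filter (fun p => deg p = c₀), g p • w p ∈ extB k n u i := by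
  classical
  have h1 : compC u i c₀ (∑ p ∈ s, g p • w p) ∈ extB k n u i := compC_mem_extB u hsum
  have h2 : compC u i c₀ (∑ p ∈ s, g p • w p) =
      ∑ p ∈ s.filter (fun p => deg p = c₀), g p • w p := by
    rw [map_sum, Finset.sum_filter]
    apply Finset.sum_congr rfl
    intro p _
    rw [map_smul]
    by_cases hd : deg p = c₀
    · rw [if_pos hd, compC_of_mem u (hd ▸ hwP p)]
    · rw [if_neg hd, compC_of_mem_ne u (hwP p) (fun h => hd h.symm), smul_zero]
  rwa [h2] at h1

end Decomp

section Degrees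

open Classical in
/-- The set of indices where a degree is `≥ 1`. -/
noncomputable def Fc (c : Fin n → ℤ) : Finset (Fin n) :=
  Finset.univ.filter (fun l => 1 ≤ c l)

/-- The negative part of a degree. -/
def acN (c : Fin n → ℤ) : Fin n → ℕ := fun l => (-(c l)).toNat

/-- The part of a degree exceeding `1`. -/
noncomputable def ucE (c : Fin n → ℤ) : Fin n →₀ ℕ :=
  Finsupp.equivFunOnFinite.symm fun l => (c l - 1).toNat

open Classical in
/-- The truncation `min(c, 1)` of a degree. -/
noncomputable def chat (c : Fin n → ℤ) : Fin n → ℤ :=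
  fun l => (if l ∈ Fc c then (1 : ℤ) else 0) - (acN c l : ℤ)

lemma mem_Fc {c : Fin n → ℤ} {l : Fin n} : l ∈ Fc c ↔ 1 ≤ c l := by
  classical
  rw [Fc]
  simp

@[simp] lemma ucE_apply (c : Fin n → ℤ) (l : Fin n) : ucE c l = (c l - 1).toNat := rfl

lemma acN_zero_on_Fc {c : Fin n → ℤ} {l : Fin n} (h : l ∈ Fc c) : acN c l = 0 := by
  rw [mem_Fc] at h
  rw [acN]
  omega

lemma chat_apply_mem {c : Fin n → ℤ} {l : Fin n} (h : l ∈ Fc c) : chat c l = 1 := by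
  classical
  rw [chat, if_pos h, acN_zero_on_Fc h]
  simp

lemma chat_apply_not_mem {c : Fin n → ℤ} {l : Fin n} (h : ¬ l ∈ Fc c) : chat c l = c l := by
  classical
  rw [mem_Fc] at h
  rw [chat, if_neg (by rwa [mem_Fc]), acN]
  omega

lemma c_eq_chat_add_ucE (c : Fin n → ℤ) (l : Fin n) : c l = chat c l + (ucE c l : ℤ) := by
  by_cases h : l ∈ Fc c
  · have h1 := chat_apply_mem h
    have h2 := mem_Fc.1 h
    rw [h1, ucE_apply]
    omega
  · have h1 := chat_apply_not_mem h
    have h2 : ¬ (1 : ℤ) ≤ c l := fun hc => h (mem_Fc.2 hc)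
    rw [h1, ucE_apply]
    omega

lemma mem_ucE_support {c : Fin n → ℤ} {l : Fin n} : l ∈ (ucE c).support ↔ 2 ≤ c l := by
  rw [Finsupp.mem_support_iff, ucE_apply]
  omega

lemma chat_one_on_ucE_support {c : Fin n → ℤ} : ∀ l ∈ (ucE c).support, 1 ≤ chat c l := by
  intro l hl
  rw [mem_ucE_support] at hl
  rw [chat_apply_mem (mem_Fc.2 (by omega))]

lemma ucE_support_sub (c : Fin n → ℤ) :
    (↑(ucE c).support : Set (Fin n)) ⊆ {l | l ∈ Fc c} := by
  intro l hl
  have : l ∈ (ucE c).support := hl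
  rw [mem_ucE_support] at this
  exact mem_Fc.2 (by omega)

lemma fiber_eq (F : Finset (Fin n)) (A : Fin n → ℕ) (hA0 : ∀ l ∈ F, A l = 0)
    (u' : Fin n →₀ ℕ) (hu' : (↑u'.support : Set (Fin n)) ⊆ {l | l ∈ F})
    (c₀ : Fin n → ℤ)
    (hc : ∀ l, ((if l ∈ F then (1 : ℤ) else 0) - (A l : ℤ)) + (u' l : ℤ) = c₀ l) :
    F = Fc c₀ ∧ u' = ucE c₀ ∧
      (fun l => (if l ∈ F then (1 : ℤ) else 0) - (A l : ℤ)) = chat c₀ := by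
  classical
  have hu0 : ∀ l, l ∉ F → u' l = 0 := fun l hl =>
    Finsupp.notMem_support_iff.1 (fun hs => hl (hu' (Finset.mem_coe.2 hs)))
  have hkey : ∀ l, (l ∈ F ↔ 1 ≤ c₀ l) ∧ (u' l : ℤ) = ((c₀ l - 1).toNat : ℤ) ∧
      ((if l ∈ F then (1 : ℤ) else 0) - (A l : ℤ)) = chat c₀ l := by
    intro l
    by_cases hlF : l ∈ F
    · have h0 := hA0 l hlF
      have h1 := hc l
      rw [if_pos hlF, h0] at h1
      have h2 : (0 : ℤ) ≤ (u' l : ℤ) := Int.natCast_nonneg _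
      have h3 : 1 ≤ c₀ l := by omega
      refine ⟨⟨fun _ => h3, fun _ => hlF⟩, by omega, ?_⟩
      rw [if_pos hlF, h0, chat_apply_mem (mem_Fc.2 h3)]
      simp
    · have h0 := hu0 l hlF
      have h1 := hc l
      rw [if_neg hlF, h0] at h1
      push_cast at h1
      have h2 : (0 : ℤ) ≤ (A l : ℤ) := Int.natCast_nonneg _
      have h3 : c₀ l ≤ 0 := by omega
      have h4 : ¬ l ∈ Fc c₀ := fun hm => by have := mem_Fc.1 hm; omega
      refine ⟨⟨fun h => absurd h hlF, fun h => by omega⟩, by omega, ?_⟩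
      rw [if_neg hlF, chat_apply_not_mem h4]
      omega
  refine ⟨?_, ?_, ?_⟩
  · apply Finset.ext
    intro l
    rw [mem_Fc]
    exact (hkey l).1
  · apply Finsupp.ext
    intro l
    have := (hkey l).2.1
    rw [ucE_apply]
    omega
  · funext l
    exact (hkey l).2.2

end Degrees

section Casts

lemma b_cast {α : Type} {ι : α → Type} {M : Type} (b : ∀ F, ι F → M) {F F' : α}
    (h : F = F') (x : ι F) : b F x = b F' (cast (congrArg ι h) x) := by
  cases h; rfl

lemma cast_inj_aux {α : Type} {ι : α → Type} {F₁ F₂ F₃ : α} (h₁ : F₁ = F₃) (h₂ : F₂ = F₃)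
    (x₁ : ι F₁) (x₂ : ι F₂)
    (h : cast (congrArg ι h₁) x₁ = cast (congrArg ι h₂) x₂) : F₁ = F₂ ∧ HEq x₁ x₂ := by
  subst h₁
  subst h₂
  exact ⟨rfl, heq_of_eq h⟩

end Casts

section Ksmul

lemma ksmul_comm {M : Type} [AddCommGroup M] [Module (MvPolynomial (Fin n) k) M]
    [Module k M] [IsScalarTower k (MvPolynomial (Fin n) k) M]
    (g : k) (p : MvPolynomial (Fin n) k) (x : M) : g • (p • x) = p • (g • x) := by
  rw [← smul_assoc, MvPolynomial.smul_eq_C_mul, mul_comm, mul_smul]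
  congr 1
  rw [← MvPolynomial.algebraMap_eq, algebraMap_smul]

end Ksmul


end StanleyAux

set_option synthInstance.maxHeartbeats 1000000 in
set_option maxHeartbeats 1000000 in
open MvPolynomial Paper in
theorem stmt_12 {k : Type} [Field k] {n : ℕ}
    (I : Ideal (MvPolynomial (Fin n) k)) {r : ℕ} (u : Fin r → (Fin n →₀ ℕ))
    -- `I` is the monomial ideal generated by the monomials `x^(u l)`:
    (hu : I = Ideal.span {g : MvPolynomial (Fin n) k | ∃ l, g = monomial (u l) (1 : k)})
    (i : ℕ)
    -- for each `F ⊆ [n]`, `b F : ι F → Ext^i_R(R/I, ω_R)` is a multigraded `k`-basis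
    -- `𝓜^i_F` of `⊕_{a ∈ ℕⁿ, supp a ∩ F = ∅} Ext^i_R(R/I, ω_R)_{e_F - a}` (where
    -- `ExtMod k n u i` is `Ext^i_R(R/I, ω_R)`, computed from the Taylor resolution
    -- of `R/I` on the generators `x^(u l)`, with natural `ℤⁿ`-grading `extPiece`):
    (ι : Finset (Fin n) → Type) [∀ F, Fintype (ι F)]
    [DecidableEq ((F : Finset (Fin n)) × ι F)]
    (b : ∀ F : Finset (Fin n), ι F → ExtMod k n u i)
    (hhom : ∀ (F : Finset (Fin n)) (x : ι F), ∃ a : Fin n → ℕ,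
      (∀ l ∈ F, a l = 0) ∧
        b F x ∈ extPiece k n u i (fun l => (if l ∈ F then (1 : ℤ) else 0) - (a l : ℤ)))
    (hbasis : ∀ F : Finset (Fin n),
      LinearIndependent k (b F) ∧
        Submodule.span k (Set.range (b F)) =
          ⨆ (a : Fin n → ℕ) (_ : ∀ l ∈ F, a l = 0),
            extPiece k n u i (fun l => (if l ∈ F then (1 : ℤ) else 0) - (a l : ℤ))) :
    -- Then `S_i = {(m, F) : F ⊆ [n], m ∈ 𝓜^i_F}` is a Stanley decomposition of
    -- `Ext^i_R(R/I, ω_R)`: each `k[{x_l : l ∈ F}] m` is a Stanley space …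
    (∀ z : (F : Finset (Fin n)) × ι F,
        IsStanleySpace k n (ExtMod k n u i) (b z.1 z.2) {l | l ∈ z.1}) ∧
      -- … and `Ext^i_R(R/I, ω_R)` is their direct sum as a `k`-vector space:
      DirectSum.IsInternal (fun z : (F : Finset (Fin n)) × ι F =>
        stanleySpan k n (ExtMod k n u i) (b z.1 z.2) {l | l ∈ z.1}) := by
  classical
  open StanleyAux in
  have hbLI : ∀ F, LinearIndependent k (b F) := fun F => (hbasis F).1
  have hbSp := fun F => (hbasis F).2
  choose A hA0 hAmem using hhom
  -- the global family of elements `x^u • b F x`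
  let T : Type := {p : ((F : Finset (Fin n)) × ι F) × (Fin n →₀ ℕ) //
    (↑p.2.support : Set (Fin n)) ⊆ {l | l ∈ p.1.1}}
  let vv : T → ExtMod k n u i := fun p =>
    (monomial p.1.2 (1 : k) : MvPolynomial (Fin n) k) • b p.1.1.1 p.1.1.2
  let cdeg : T → Fin n → ℤ := fun p l =>
    ((if l ∈ p.1.1.1 then (1 : ℤ) else 0) - (A p.1.1.1 p.1.1.2 l : ℤ)) + (p.1.2 l : ℤ)
  have hvmem : ∀ p : T, vv p ∈ extPiece k n u i (cdeg p) := fun p =>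
    smul_mem_extPiece u p.1.2 (hAmem p.1.1.1 p.1.1.2)
  -- Part A : Stanley spaces
  have partA : ∀ z : (F : Finset (Fin n)) × ι F,
      IsStanleySpace k n (ExtMod k n u i) (b z.1 z.2) {l | l ∈ z.1} := by
    intro z u' hu' h0
    apply (hbLI z.1).ne_zero z.2
    refine extPiece_smul_eq_zero u u'
      (a := fun l => (if l ∈ z.1 then (1 : ℤ) else 0) - (A z.1 z.2 l : ℤ)) ?_
      (hAmem z.1 z.2) h0
    intro l hl
    have hlF : l ∈ z.1 := hu' (Finset.mem_coe.2 hl)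
    simp [hlF, hA0 z.1 z.2 l hlF]
  -- Global linear independence of the family `vv`
  have hLI : LinearIndependent k vv := by
    rw [linearIndependent_iff']
    intro s g hsum p₀ hp₀
    have hrep : ∀ p : T, ∃ x : extZ k n u i,
        x.1 ∈ taylorPiece k n u i (cdeg p) ∧ Q u i x = vv p :=
      fun p => (mem_extPiece_iff u).1 (hvmem p)
    choose xw hxwP hxwQ using hrep
    have hQsum : Q u i (∑ p ∈ s, g p • xw p) = 0 := by
      rw [map_sum]
      simp only [map_smul, hxwQ]
      exact hsum
    have hBsum : ((∑ p ∈ s, g p • xw p : extZ k n u i) : TaylorDual k n (r := r) i)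
        ∈ extB k n u i := (Q_eq_zero_iff u).1 hQsum
    have hcoe : ((∑ p ∈ s, g p • xw p : extZ k n u i) : TaylorDual k n (r := r) i)
        = ∑ p ∈ s, g p • ((xw p : TaylorDual k n (r := r) i)) := by
      rw [AddSubmonoidClass.coe_finset_sum]
      exact Finset.sum_congr rfl fun p _ => rfl
    rw [hcoe] at hBsum
    have hfB : ∑ p ∈ s.filter (fun p => cdeg p = cdeg p₀),
        g p • ((xw p : TaylorDual k n (r := r) i)) ∈ extB k n u i :=
      split_zero u s g _ cdeg (fun p => hxwP p) hBsum (cdeg p₀)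
    have hQf : ∑ p ∈ s.filter (fun p => cdeg p = cdeg p₀), g p • vv p = 0 := by
      have hXf : ((∑ p ∈ s.filter (fun p => cdeg p = cdeg p₀), g p • xw p : extZ k n u i) :
          TaylorDual k n (r := r) i)
          = ∑ p ∈ s.filter (fun p => cdeg p = cdeg p₀),
              g p • ((xw p : TaylorDual k n (r := r) i)) := by
        rw [AddSubmonoidClass.coe_finset_sum]
        exact Finset.sum_congr rfl fun p _ => rfl
      have h0 : Q u i (∑ p ∈ s.filter (fun p => cdeg p = cdeg p₀), g p • xw p) = 0 :=
        (Q_eq_zero_iff u).2 (by rw [hXf]; exact hfB)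
      rw [map_sum] at h0
      simpa only [map_smul, hxwQ] using h0
    have hfib : ∀ p : T, cdeg p = cdeg p₀ →
        p.1.1.1 = Fc (cdeg p₀) ∧ p.1.2 = ucE (cdeg p₀) ∧
          (fun l => (if l ∈ p.1.1.1 then (1 : ℤ) else 0) - (A p.1.1.1 p.1.1.2 l : ℤ)) =
            chat (cdeg p₀) := by
      intro p hp
      exact fiber_eq p.1.1.1 (A p.1.1.1 p.1.1.2) (hA0 p.1.1.1 p.1.1.2) p.1.2 p.2 (cdeg p₀)
        (fun l => congrFun hp l)
    have hvv : ∀ p ∈ s.filter (fun p => cdeg p = cdeg p₀),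
        g p • vv p = (monomial (ucE (cdeg p₀)) (1 : k) : MvPolynomial (Fin n) k) •
          (g p • b p.1.1.1 p.1.1.2) := by
      intro p hp
      obtain ⟨hF, hu2, hD⟩ := hfib p (Finset.mem_filter.1 hp).2
      calc g p • vv p
          = (monomial p.1.2 (1 : k) : MvPolynomial (Fin n) k) • (g p • b p.1.1.1 p.1.1.2) :=
            ksmul_comm _ _ _
        _ = _ := by rw [hu2]
    have hbmem : ∀ p ∈ s.filter (fun p => cdeg p = cdeg p₀),
        b p.1.1.1 p.1.1.2 ∈ extPiece k n u i (chat (cdeg p₀)) := by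
      intro p hp
      obtain ⟨hF, hu2, hD⟩ := hfib p (Finset.mem_filter.1 hp).2
      have hm := hAmem p.1.1.1 p.1.1.2
      rwa [hD] at hm
    have hsum2 : (monomial (ucE (cdeg p₀)) (1 : k) : MvPolynomial (Fin n) k) •
        (∑ p ∈ s.filter (fun p => cdeg p = cdeg p₀), g p • b p.1.1.1 p.1.1.2) = 0 := by
      rw [Finset.smul_sum, ← hQf]
      exact Finset.sum_congr rfl (fun p hp => (hvv p hp).symm)
    have hbTot : (∑ p ∈ s.filter (fun p => cdeg p = cdeg p₀), g p • b p.1.1.1 p.1.1.2)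
        ∈ extPiece k n u i (chat (cdeg p₀)) :=
      Submodule.sum_mem _ (fun p hp => Submodule.smul_mem _ _ (hbmem p hp))
    have hbTot0 : (∑ p ∈ s.filter (fun p => cdeg p = cdeg p₀), g p • b p.1.1.1 p.1.1.2) = 0 :=
      extPiece_smul_eq_zero u (ucE (cdeg p₀)) chat_one_on_ucE_support hbTot hsum2
    -- reindex the fiber sum over `ι (Fc (cdeg p₀))`
    let fe : {p : T // p ∈ s.filter (fun p => cdeg p = cdeg p₀)} → ι (Fc (cdeg p₀)) := fun q =>
      cast (congrArg ι (hfib q.1 (Finset.mem_filter.1 q.2).2).1) q.1.1.1.2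
    have hGcomb : Finsupp.linearCombination k (b (Fc (cdeg p₀)))
        (∑ q ∈ (s.filter (fun p => cdeg p = cdeg p₀)).attach,
          Finsupp.single (fe q) (g q.1)) = 0 := by
      rw [map_sum]
      have hterm : ∀ q ∈ (s.filter (fun p => cdeg p = cdeg p₀)).attach,
          Finsupp.linearCombination k (b (Fc (cdeg p₀))) (Finsupp.single (fe q) (g q.1)) =
            g q.1 • b q.1.1.1.1 q.1.1.1.2 := by
        intro q _
        rw [Finsupp.linearCombination_single]
        congr 1
        exact (b_cast b (hfib q.1 (Finset.mem_filter.1 q.2).2).1 q.1.1.1.2).symm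
      rw [Finset.sum_congr rfl hterm,
        Finset.sum_attach (s.filter (fun p => cdeg p = cdeg p₀))
          (fun p => g p • b p.1.1.1 p.1.1.2)]
      exact hbTot0
    have hG0 : (∑ q ∈ (s.filter (fun p => cdeg p = cdeg p₀)).attach,
        Finsupp.single (fe q) (g q.1)) = 0 :=
      linearIndependent_iff.1 (hbLI (Fc (cdeg p₀))) _ hGcomb
    have hp₀f : p₀ ∈ s.filter (fun p => cdeg p = cdeg p₀) := Finset.mem_filter.2 ⟨hp₀, rfl⟩
    have hGapp : (∑ q ∈ (s.filter (fun p => cdeg p = cdeg p₀)).attach,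
        Finsupp.single (fe q) (g q.1)) (fe ⟨p₀, hp₀f⟩) = g p₀ := by
      have h1 : ((∑ q ∈ (s.filter (fun p => cdeg p = cdeg p₀)).attach,
          Finsupp.single (fe q) (g q.1)) : ι (Fc (cdeg p₀)) →₀ k) (fe ⟨p₀, hp₀f⟩)
          = ∑ q ∈ (s.filter (fun p => cdeg p = cdeg p₀)).attach,
              (Finsupp.single (fe q) (g q.1)) (fe ⟨p₀, hp₀f⟩) :=
        map_sum (Finsupp.applyAddHom (M := k) (fe ⟨p₀, hp₀f⟩)) _ _
      rw [h1, Finset.sum_eq_single_of_mem ⟨p₀, hp₀f⟩ (Finset.mem_attach _ _)]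
      · rw [Finsupp.single_apply, if_pos rfl]
      · intro q _ hne
        rw [Finsupp.single_apply, if_neg]
        intro hfe
        apply hne
        obtain ⟨hFF, hHH⟩ := cast_inj_aux (ι := ι)
          (hfib q.1 (Finset.mem_filter.1 q.2).2).1
          (hfib p₀ rfl).1 q.1.1.1.2 p₀.1.1.2 hfe
        have hq1 : q.1 = p₀ := by
          apply Subtype.ext
          apply Prod.ext
          · exact Sigma.ext hFF hHH
          · rw [(hfib q.1 (Finset.mem_filter.1 q.2).2).2.1, (hfib p₀ rfl).2.1]
        exact Subtype.ext hq1
    rw [hG0] at hGapp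
    simpa using hGapp.symm
  -- Stanley spans as spans of sub-families of `vv`
  have hspan : ∀ z : (F : Finset (Fin n)) × ι F,
      stanleySpan k n (ExtMod k n u i) (b z.1 z.2) {l | l ∈ z.1} =
        Submodule.span k (vv '' {p : T | p.1.1 = z}) := by
    intro z
    rw [stanleySpan]
    congr 1
    ext x
    constructor
    · rintro ⟨u', hu', rfl⟩
      exact ⟨⟨(z, u'), hu'⟩, rfl, rfl⟩
    · rintro ⟨p, hp, rfl⟩
      obtain ⟨⟨zz, u'⟩, hprop⟩ := p
      have hzz : zz = z := hp
      subst hzz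
      exact ⟨u', hprop, rfl⟩
  -- Independence of the Stanley spaces
  have hind : iSupIndep (fun z : (F : Finset (Fin n)) × ι F =>
      stanleySpan k n (ExtMod k n u i) (b z.1 z.2) {l | l ∈ z.1}) := by
    intro z₀
    simp only [hspan]
    have hrw : (⨆ z, ⨆ (_ : z ≠ z₀), Submodule.span k (vv '' {p : T | p.1.1 = z})) =
        Submodule.span k (vv '' ⋃ z, ⋃ (_ : z ≠ z₀), {p : T | p.1.1 = z}) := by
      rw [Set.image_iUnion₂]
      exact (Submodule.span_iUnion₂ _).symm
    rw [hrw]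
    apply hLI.disjoint_span_image
    rw [Set.disjoint_left]
    intro p hp hpt
    rw [Set.mem_iUnion₂] at hpt
    obtain ⟨z, hz, hpz⟩ := hpt
    exact hz (hpz.symm.trans hp)
  -- The Stanley spaces fill up the module
  have htop : (⨆ z : (F : Finset (Fin n)) × ι F,
      stanleySpan k n (ExtMod k n u i) (b z.1 z.2) {l | l ∈ z.1}) = ⊤ := by
    rw [eq_top_iff]
    refine le_trans (top_le_iSup_extPiece u i) (iSup_le ?_)
    intro c y hy
    have hdeg : c = fun l => chat c l + ((ucE c) l : ℤ) := funext (c_eq_chat_add_ucE c)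
    rw [hdeg] at hy
    obtain ⟨x, hx, rfl⟩ := extPiece_smul_surj u (ucE c) chat_one_on_ucE_support hy
    have hstep : extPiece k n u i (chat c) ≤ Submodule.span k (Set.range (b (Fc c))) := by
      rw [hbSp (Fc c)]
      exact le_iSup₂_of_le (acN c) (fun l hl => acN_zero_on_Fc hl) (le_of_eq rfl)
    have hx' : x ∈ Submodule.span k (Set.range (b (Fc c))) := hstep hx
    have himg : (monomial (ucE c) (1 : k) : MvPolynomial (Fin n) k) • x ∈
        Submodule.map ((LinearMap.lsmul (MvPolynomial (Fin n) k) (ExtMod k n u i)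
          (monomial (ucE c) (1 : k))).restrictScalars k)
          (Submodule.span k (Set.range (b (Fc c)))) :=
      Submodule.mem_map.2 ⟨x, hx', rfl⟩
    rw [Submodule.map_span] at himg
    refine Submodule.span_le.2 ?_ himg
    rintro _ ⟨_, ⟨x', rfl⟩, rfl⟩
    refine Submodule.mem_iSup_of_mem ⟨Fc c, x'⟩ ?_
    exact Submodule.subset_span ⟨ucE c, ucE_support_sub c, rfl⟩
  refine ⟨partA, ?_⟩
  rw [DirectSum.isInternal_submodule_iff_iSupIndep_and_iSup_eq_top]
  exact ⟨hind, htop⟩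
end
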